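/- arXiv:1510.06249 — 3 statements merged into one kernel-verified Lean document; each statement's English description precedes it below -/
import Mathlib

section
/- Let M be a finite length module over a ring R and let E_1, …, E_s be representatives of the isomorphism classes of simple composition factors of M. Let M_i be the maximal submodule of M all of whose composition factors are isomorphic to E_i. If Ext¹_R(E_i, E_j) = 0 for all i ≠ j, then M is the direct sum of its isotypic components: M = M_1 ⊕ ⋯ ⊕ M_s. -/
universe u v

/-- A submodule `N` of `M` is `E`-isotypic if every simple subquotient of `N`
(equivalently, every composition factor of `N`) is isomorphic to `E`. -/
def IsIsotypicOf (R : Type u) [Ring R] {M : Type v} [AddCommGroup M] [Module R M]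
    (E : Type v) [AddCommGroup E] [Module R E] (N : Submodule R M) : Prop :=
  ∀ A B : Submodule R M, A ≤ B → B ≤ N →
    IsSimpleModule R (↥B ⧸ (A.comap B.subtype)) →
      Nonempty ((↥B ⧸ (A.comap B.subtype)) ≃ₗ[R] E)

section Infrastructure

variable {R : Type u} [Ring R]

/-- Every simple quotient of a submodule of `N` is isomorphic to `E i` for some `i ∈ T`. -/
def SubFac {s : ℕ} (E : Fin s → Type v) [∀ i, AddCommGroup (E i)] [∀ i, Module R (E i)]
    (T : Set (Fin s)) {X : Type v} [AddCommGroup X] [Module R X] (N : Submodule R X) : Prop :=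
  ∀ B : Submodule R X, B ≤ N → ∀ (T' : Type v) [AddCommGroup T'] [Module R T']
    (φ : ↥B →ₗ[R] T'), Function.Surjective φ → IsSimpleModule R T' →
      ∃ i ∈ T, Nonempty (T' ≃ₗ[R] E i)

variable {s : ℕ} {E : Fin s → Type v} [∀ i, AddCommGroup (E i)] [∀ i, Module R (E i)]

lemma subFac_mono {T : Set (Fin s)} {X : Type v} [AddCommGroup X] [Module R X]
    {N N' : Submodule R X} (h : N' ≤ N) (hN : SubFac E T N) : SubFac E T N' :=
  fun B hB => hN B (hB.trans h)

lemma subFac_mono_set {T T' : Set (Fin s)} (hT : T ⊆ T') {X : Type v} [AddCommGroup X]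
    [Module R X] {N : Submodule R X} (hN : SubFac E T N) : SubFac E T' N := by
  intro B hB T'' _ _ φ hφ hs
  obtain ⟨i, hi, he⟩ := hN B hB T'' φ hφ hs
  exact ⟨i, hT hi, he⟩

lemma no_simple_quot_of_le_bot {X : Type v} [AddCommGroup X] [Module R X]
    {B : Submodule R X} (hB : B ≤ ⊥) {T' : Type v} [AddCommGroup T'] [Module R T']
    (φ : ↥B →ₗ[R] T') (hφ : Function.Surjective φ) (hs : IsSimpleModule R T') : False := by
  haveI := hs
  obtain ⟨a, b, hab⟩ := IsSimpleModule.nontrivial R T'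
  obtain ⟨x, rfl⟩ := hφ a
  obtain ⟨y, rfl⟩ := hφ b
  have hx : x = 0 := Subtype.ext ((Submodule.mem_bot R).mp (hB x.2))
  have hy : y = 0 := Subtype.ext ((Submodule.mem_bot R).mp (hB y.2))
  rw [hx, hy] at hab
  exact hab rfl

lemma subFac_bot {T : Set (Fin s)} {X : Type v} [AddCommGroup X] [Module R X] :
    SubFac E T (⊥ : Submodule R X) :=
  fun _ hB T' _ _ φ hφ hs => absurd (no_simple_quot_of_le_bot hB φ hφ hs) not_false

/-- A surjection from a simple module onto a nontrivial module is an equivalence. -/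
noncomputable def equivOfSurjOfSimple {A T' : Type v} [AddCommGroup A] [Module R A]
    [AddCommGroup T'] [Module R T'] (φ : A →ₗ[R] T') (hφ : Function.Surjective φ)
    (hA : IsSimpleModule R A) (hT' : Nontrivial T') : A ≃ₗ[R] T' := by
  refine LinearEquiv.ofBijective φ ⟨?_, hφ⟩
  rw [← LinearMap.ker_eq_bot]
  rcases hA.1.2 (LinearMap.ker φ) with h | h
  · exact h
  · exfalso
    obtain ⟨a, b, hab⟩ := hT'
    obtain ⟨x, rfl⟩ := hφ a
    obtain ⟨y, rfl⟩ := hφ b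
    have hx : φ x = 0 := by have : x ∈ LinearMap.ker φ := h ▸ Submodule.mem_top; exact this
    have hy : φ y = 0 := by have : y ∈ LinearMap.ker φ := h ▸ Submodule.mem_top; exact this
    rw [hx, hy] at hab
    exact hab rfl

lemma subFac_map {X Y : Type v} [AddCommGroup X] [Module R X] [AddCommGroup Y] [Module R Y]
    (f : X →ₗ[R] Y) {T : Set (Fin s)} {Q : Submodule R X} (h : SubFac E T Q) :
    SubFac E T (Q.map f) := by
  intro B hB T' _ _ φ hφ hs
  have hmem : ∀ x : ↥(Q ⊓ Submodule.comap f B : Submodule R X), f (x : X) ∈ B := fun x => x.2.2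
  have hρs : Function.Surjective
      (LinearMap.codRestrict B (f ∘ₗ (Q ⊓ Submodule.comap f B).subtype) hmem) := by
    rintro ⟨b, hb⟩
    obtain ⟨q, hq, rfl⟩ := hB hb
    exact ⟨⟨q, hq, hb⟩, rfl⟩
  exact h (Q ⊓ Submodule.comap f B) inf_le_left T' (φ ∘ₗ _) (hφ.comp hρs) hs

/-- Restriction of `f` to a submodule meeting the kernel trivially. -/
noncomputable def restrictMapEquiv {X Y : Type v} [AddCommGroup X] [Module R X]
    [AddCommGroup Y] [Module R Y] (f : X →ₗ[R] Y) (Q : Submodule R X)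
    (hdisj : Q ⊓ LinearMap.ker f = ⊥) : ↥Q ≃ₗ[R] ↥(Q.map f) := by
  refine LinearEquiv.ofBijective
    (LinearMap.codRestrict (Q.map f) (f ∘ₗ Q.subtype)
      (fun x => Submodule.mem_map_of_mem x.2)) ⟨?_, ?_⟩
  · intro a b hab
    have h1 : f ((a : X) - b) = 0 := by
      have := congrArg (Subtype.val) hab
      simp only [LinearMap.codRestrict_apply, LinearMap.coe_comp, Function.comp_apply,
        Submodule.coe_subtype] at this
      rw [map_sub, this, sub_self]
    have h2 : (a : X) - b ∈ Q ⊓ LinearMap.ker f := ⟨sub_mem a.2 b.2, h1⟩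
    rw [hdisj] at h2
    exact Subtype.ext (sub_eq_zero.mp h2)
  · rintro ⟨y, x, hx, rfl⟩
    exact ⟨⟨x, hx⟩, rfl⟩

lemma subFac_of_disjoint_ker {X Y : Type v} [AddCommGroup X] [Module R X] [AddCommGroup Y]
    [Module R Y] (f : X →ₗ[R] Y) {T : Set (Fin s)} {Q : Submodule R X}
    (hdisj : Q ⊓ LinearMap.ker f = ⊥) (h : SubFac E T (Q.map f)) : SubFac E T Q := by
  intro B hB T' _ _ φ hφ hs
  have hd : B ⊓ LinearMap.ker f = ⊥ := by
    rw [eq_bot_iff, ← hdisj]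
    exact inf_le_inf_right _ hB
  have e := restrictMapEquiv f B hd
  exact h (B.map f) (Submodule.map_mono hB) T' (φ ∘ₗ (e.symm : ↥(B.map f) →ₗ[R] ↥B))
    (hφ.comp e.symm.surjective) hs

lemma subFac_top_congr {X Y : Type v} [AddCommGroup X] [Module R X] [AddCommGroup Y]
    [Module R Y] (e : X ≃ₗ[R] Y) {T : Set (Fin s)}
    (h : SubFac E T (⊤ : Submodule R X)) : SubFac E T (⊤ : Submodule R Y) := by
  have := subFac_map (e : X →ₗ[R] Y) h
  rwa [Submodule.map_top, LinearEquiv.range] at this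

/-- If `φ : B → T'` is surjective and kills `B ⊓ ker f`, then `T'` is also a surjective
image of `B.map f`. -/
lemma exists_factor_surj {X Y T' : Type v} [AddCommGroup X] [Module R X] [AddCommGroup Y]
    [Module R Y] [AddCommGroup T'] [Module R T'] (f : X →ₗ[R] Y) (B : Submodule R X)
    (φ : ↥B →ₗ[R] T') (hφ : Function.Surjective φ)
    (hk : ∀ x : ↥B, f (x : X) = 0 → φ x = 0) :
    ∃ χ : ↥(B.map f) →ₗ[R] T', Function.Surjective χ := by
  have hmem : ∀ x : ↥B, (f ∘ₗ B.subtype) x ∈ B.map f := fun x => Submodule.mem_map_of_mem x.2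
  let ρ : ↥B →ₗ[R] ↥(B.map f) := LinearMap.codRestrict (B.map f) (f ∘ₗ B.subtype) hmem
  have hρs : Function.Surjective ρ := by
    rintro ⟨y, x, hx, rfl⟩
    exact ⟨⟨x, hx⟩, rfl⟩
  have hkρ : LinearMap.ker ρ ≤ LinearMap.ker φ := by
    intro x hx
    have h0 : f (x : X) = 0 := congrArg Subtype.val hx
    exact hk x h0
  refine ⟨((LinearMap.ker ρ).liftQ φ hkρ) ∘ₗ
    ((ρ.quotKerEquivOfSurjective hρs).symm : ↥(B.map f) →ₗ[R] (↥B ⧸ LinearMap.ker ρ)), ?_⟩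
  have h1 : Function.Surjective ((LinearMap.ker ρ).liftQ φ hkρ) := by
    rw [← LinearMap.range_eq_top, Submodule.range_liftQ, LinearMap.range_eq_top]
    exact hφ
  exact h1.comp (ρ.quotKerEquivOfSurjective hρs).symm.surjective

/-- Extension lemma: if both `ker f` and `P` have all simple subquotients of type `T`,
then so does `comap f P`. -/
lemma subFac_comap {X Y : Type v} [AddCommGroup X] [Module R X] [AddCommGroup Y]
    [Module R Y] (f : X →ₗ[R] Y) {T : Set (Fin s)}
    (hker : SubFac E T (LinearMap.ker f)) {P : Submodule R Y}
    (hP : SubFac E T P) : SubFac E T (P.comap f) := by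
  intro B hB T' _ _ φ hφ hs
  haveI := hs
  by_cases hk : ∀ x : ↥B, f (x : X) = 0 → φ x = 0
  · obtain ⟨χ, hχ⟩ := exists_factor_surj f B φ hφ hk
    exact hP (B.map f) ((Submodule.map_mono hB).trans (Submodule.map_comap_le f P)) T' χ hχ hs
  · push_neg at hk
    obtain ⟨x₀, hx₀0, hx₀⟩ := hk
    have hCle : B ⊓ LinearMap.ker f ≤ B := inf_le_left
    have hψs : Function.Surjective (φ ∘ₗ Submodule.inclusion hCle) := by
      rw [← LinearMap.range_eq_top]
      rcases hs.1.2 (LinearMap.range (φ ∘ₗ Submodule.inclusion hCle)) with hr | hr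
      · exfalso
        apply hx₀
        have hx₀C : (x₀ : X) ∈ B ⊓ LinearMap.ker f := ⟨x₀.2, hx₀0⟩
        have : (φ ∘ₗ Submodule.inclusion hCle) ⟨(x₀ : X), hx₀C⟩ ∈
            LinearMap.range (φ ∘ₗ Submodule.inclusion hCle) := ⟨_, rfl⟩
        rw [hr, Submodule.mem_bot] at this
        exact this
      · exact hr
    exact hker (B ⊓ LinearMap.ker f) inf_le_right T' _ hψs hs

lemma subFac_sup {T : Set (Fin s)} {X : Type v} [AddCommGroup X] [Module R X]
    {N N' : Submodule R X} (h : SubFac E T N) (h' : SubFac E T N') :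
    SubFac E T (N ⊔ N') := by
  have hker : SubFac E T (LinearMap.ker N.mkQ) := by rwa [Submodule.ker_mkQ]
  have h2 := subFac_comap N.mkQ hker (subFac_map N.mkQ h')
  rwa [Submodule.comap_map_eq, Submodule.ker_mkQ, sup_comm] at h2

lemma subFac_sSup {T : Set (Fin s)} {X : Type v} [AddCommGroup X] [Module R X]
    [IsNoetherian R X] {S : Set (Submodule R X)} (h : ∀ N ∈ S, SubFac E T N) :
    SubFac E T (sSup S) := by
  intro B hB T' _ _ φ hφ hs
  have hc : IsCompactElement B :=
    (Submodule.fg_iff_compact B).mp (IsNoetherian.noetherian B)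
  obtain ⟨t, hts, hBt⟩ := (CompleteLattice.isCompactElement_iff_exists_le_sSup_of_le_sSup _ B).mp hc S hB
  have hsup : SubFac E T (t.sup id) :=
    Finset.sup_induction subFac_bot (fun a ha b hb => subFac_sup ha hb)
      (fun N hN => h N (hts hN))
  exact hsup B hBt T' φ hφ hs

lemma subFac_iSup {T : Set (Fin s)} {X : Type v} [AddCommGroup X] [Module R X]
    [IsNoetherian R X] {ι : Sort*} {f : ι → Submodule R X}
    (h : ∀ i, SubFac E T (f i)) : SubFac E T (⨆ i, f i) := by
  rw [iSup]
  exact subFac_sSup (fun N hN => by obtain ⟨i, rfl⟩ := hN; exact h i)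

/-- `X` equivalent to a simple `E k` has all simple subquotients of type `k`. -/
lemma subFac_top_of_equiv {X : Type v} [AddCommGroup X] [Module R X] (k : Fin s)
    (hk : IsSimpleModule R (E k)) (he : Nonempty (X ≃ₗ[R] E k)) {T : Set (Fin s)}
    (hkT : k ∈ T) : SubFac E T (⊤ : Submodule R X) := by
  intro B _ T' _ _ φ hφ hs
  haveI := hs
  haveI := hk
  obtain ⟨e⟩ := he
  haveI hXs : IsSimpleModule R X := IsSimpleModule.congr e
  rcases hXs.1.2 B with hb | ht
  · exact absurd (no_simple_quot_of_le_bot hb.le φ hφ hs) not_false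
  · subst ht
    have hψs : Function.Surjective (φ ∘ₗ (Submodule.topEquiv.symm.toLinearMap :
        X →ₗ[R] ↥(⊤ : Submodule R X))) := by
      intro t
      obtain ⟨b, hb⟩ := hφ t
      exact ⟨Submodule.topEquiv b, by
        show φ (Submodule.topEquiv.symm (Submodule.topEquiv b)) = t
        rw [LinearEquiv.symm_apply_apply]; exact hb⟩
    have e2 := equivOfSurjOfSimple _ hψs hXs (IsSimpleModule.nontrivial R T')
    exact ⟨k, hkT, ⟨e2.symm.trans e⟩⟩

end Infrastructure

section Equivs

variable {R : Type u} [Ring R]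

/-- `B / (B ⊓ ker f)` is equivalent to `f(B)`. -/
noncomputable def quotMapEquiv {X Y : Type v} [AddCommGroup X] [Module R X]
    [AddCommGroup Y] [Module R Y] (f : X →ₗ[R] Y) (B : Submodule R X) :
    (↥B ⧸ (LinearMap.ker f).comap B.subtype) ≃ₗ[R] ↥(B.map f) :=
  (Submodule.quotEquivOfEq _ _ (LinearMap.ker_comp B.subtype f).symm).trans
    ((f ∘ₗ B.subtype).quotKerEquivRange.trans
      (LinearEquiv.ofEq _ _ (by rw [LinearMap.range_comp, Submodule.range_subtype])))

/-- A complement of `V` is equivalent to `X ⧸ V`. -/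
noncomputable def complEquiv {X : Type v} [AddCommGroup X] [Module R X]
    (W V : Submodule R X) (h1 : W ⊓ V = ⊥) (h2 : W ⊔ V = ⊤) : ↥W ≃ₗ[R] X ⧸ V := by
  refine LinearEquiv.ofBijective (V.mkQ ∘ₗ W.subtype) ⟨?_, ?_⟩
  · intro a b hab
    have h3 : (a : X) - b ∈ V := by
      rw [← Submodule.Quotient.eq V]
      simpa using hab
    have h4 : (a : X) - b ∈ W ⊓ V := ⟨sub_mem a.2 b.2, h3⟩
    rw [h1] at h4
    exact Subtype.ext (sub_eq_zero.mp h4)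
  · intro y
    obtain ⟨x, rfl⟩ := V.mkQ_surjective y
    have hx : x ∈ W ⊔ V := h2.symm ▸ Submodule.mem_top
    rw [Submodule.mem_sup] at hx
    obtain ⟨w, hw, v, hv, rfl⟩ := hx
    refine ⟨⟨w, hw⟩, ?_⟩
    show V.mkQ w = V.mkQ (w + v)
    simp only [Submodule.mkQ_apply]
    rw [Submodule.Quotient.eq]
    simpa using neg_mem hv

end Equivs

section Cbnd

variable {R : Type u} [Ring R]

/-- All strictly increasing chains of submodules of `X` have length at most `n`. -/
def cbnd (R : Type u) [Ring R] (n : ℕ) (X : Type v) [AddCommGroup X] [Module R X] : Prop :=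
  ∀ (f : ℕ → Submodule R X) (m : ℕ), (∀ i < m, f i < f (i + 1)) → m ≤ n

lemma comap_lt_comap_of_surj {X Y : Type v} [AddCommGroup X] [Module R X] [AddCommGroup Y]
    [Module R Y] (f : X →ₗ[R] Y) (hf : Function.Surjective f) {p q : Submodule R Y}
    (h : p < q) : p.comap f < q.comap f := by
  refine lt_of_le_of_ne (Submodule.comap_mono h.le) (fun he => h.ne ?_)
  have := congrArg (Submodule.map f) he
  rwa [Submodule.map_comap_eq, Submodule.map_comap_eq, LinearMap.range_eq_top.mpr hf,
    top_inf_eq, top_inf_eq] at this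

lemma map_subtype_lt {X : Type v} [AddCommGroup X] [Module R X] {N : Submodule R X}
    {p q : Submodule R ↥N} (h : p < q) : p.map N.subtype < q.map N.subtype := by
  refine lt_of_le_of_ne (Submodule.map_mono h.le) (fun he => h.ne ?_)
  have := congrArg (Submodule.comap N.subtype) he
  rwa [Submodule.comap_map_eq, Submodule.comap_map_eq, Submodule.ker_subtype,
    sup_bot_eq, sup_bot_eq] at this

lemma cb_congr {X Y : Type v} [AddCommGroup X] [Module R X] [AddCommGroup Y] [Module R Y]
    (e : X ≃ₗ[R] Y) {n : ℕ} (h : cbnd R n X) : cbnd R n Y := by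
  intro f m hf
  exact h (fun i => (f i).comap (e : X →ₗ[R] Y)) m
    (fun i hi => comap_lt_comap_of_surj _ e.surjective (hf i hi))

lemma cb_sub' {X : Type v} [AddCommGroup X] [Module R X] {n : ℕ} (h : cbnd R n X)
    (N : Submodule R X) : cbnd R n ↥N :=
  fun f m hf => h (fun i => (f i).map N.subtype) m (fun i hi => map_subtype_lt (hf i hi))

lemma cb_quot' {X : Type v} [AddCommGroup X] [Module R X] {n : ℕ} (h : cbnd R n X)
    (p : Submodule R X) : cbnd R n (X ⧸ p) :=
  fun f m hf => h (fun i => (f i).comap p.mkQ) m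
    (fun i hi => comap_lt_comap_of_surj _ p.mkQ_surjective (hf i hi))

lemma cb_sub {X : Type v} [AddCommGroup X] [Module R X] {n : ℕ} (h : cbnd R n X)
    (N : Submodule R X) (hN : N ≠ ⊤) : cbnd R (n - 1) ↥N := by
  intro f m hf
  have hm1 : m + 1 ≤ n := by
    refine h (fun i => if i ≤ m then (f i).map N.subtype else ⊤) (m + 1) ?_
    intro i hi
    rcases Nat.lt_or_ge i m with h1 | h2
    · rw [if_pos (by omega), if_pos (by omega)]
      exact map_subtype_lt (hf i h1)
    · have him : i = m := by omega
      rw [if_pos (by omega), if_neg (by omega)]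
      exact lt_of_le_of_lt (Submodule.map_subtype_le N (f i)) (Ne.lt_top hN)
  omega

lemma cb_quot {X : Type v} [AddCommGroup X] [Module R X] {n : ℕ} (h : cbnd R n X)
    (p : Submodule R X) (hp : p ≠ ⊥) : cbnd R (n - 1) (X ⧸ p) := by
  intro f m hf
  have hm1 : m + 1 ≤ n := by
    refine h (fun i => if i = 0 then ⊥ else (f (i - 1)).comap p.mkQ) (m + 1) ?_
    intro i hi
    rcases Nat.eq_zero_or_pos i with h1 | h2
    · subst h1
      rw [if_pos rfl, if_neg (by omega)]
      refine bot_lt_iff_ne_bot.mpr (fun hbot => hp ?_)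
      rw [eq_bot_iff, ← hbot]
      intro x hx
      show p.mkQ x ∈ f (1 - 1)
      have : p.mkQ x = 0 := (Submodule.Quotient.mk_eq_zero p).mpr hx
      rw [this]
      exact zero_mem _
    · rw [if_neg (by omega), if_neg (by omega)]
      have he : i + 1 - 1 = (i - 1) + 1 := by omega
      rw [he]
      exact comap_lt_comap_of_surj _ p.mkQ_surjective (hf (i - 1) (by omega))
  omega

lemma cb_pos {X : Type v} [AddCommGroup X] [Module R X] {n : ℕ} (h : cbnd R n X)
    (hX : Nontrivial X) : 0 < n := by
  have hbt : (⊥ : Submodule R X) ≠ ⊤ := by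
    obtain ⟨x, hx⟩ := exists_ne (0 : X)
    intro hh
    have : x ∈ (⊥ : Submodule R X) := hh ▸ Submodule.mem_top
    exact hx ((Submodule.mem_bot R).mp this)
  have := h (fun i => if i = 0 then ⊥ else ⊤) 1 (fun i hi => by
    have : i = 0 := by omega
    subst this
    rw [if_pos rfl, if_neg (by omega)]
    exact hbt.lt_top)
  omega

lemma eq_of_le_of_inf_sup {α : Type*} [Lattice α] [IsModularLattice α] {a b c : α}
    (hab : a ≤ b) (hi : a ⊓ c = b ⊓ c) (hs : a ⊔ c = b ⊔ c) : a = b :=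
  calc a = a ⊔ a ⊓ c := sup_inf_self.symm
  _ = a ⊔ b ⊓ c := by rw [hi]
  _ = a ⊔ c ⊓ b := by rw [inf_comm (a := b)]
  _ = (a ⊔ c) ⊓ b := (sup_inf_assoc_of_le c hab).symm
  _ = (b ⊔ c) ⊓ b := by rw [hs]
  _ = b := inf_eq_right.mpr le_sup_left

lemma cb_exists {X : Type v} [AddCommGroup X] [Module R X] (h : IsFiniteLength R X) :
    ∃ n, cbnd R n X := by
  induction h with
  | of_subsingleton =>
    refine ⟨0, fun f m hf => ?_⟩
    by_contra hm
    have h0 := hf 0 (by omega)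
    refine h0.ne (le_antisymm h0.le ?_)
    intro x hx
    rw [Subsingleton.elim x 0]
    exact zero_mem _
  | @of_simple_quotient M _ _ N _ hfin ih =>
    obtain ⟨n, hn⟩ := ih
    refine ⟨n + 1, ?_⟩
    intro f m hf
    by_contra hm
    push_neg at hm
    set g : ℕ → Submodule R ↥N := fun i => Submodule.comap N.subtype (f i) with hg
    have hmono : ∀ i j, i ≤ j → j ≤ m → f i ≤ f j := by
      intro i j hij hjm
      induction j with
      | zero => exact Nat.le_zero.mp hij ▸ le_rfl
      | succ j ihj =>
        rcases Nat.lt_or_ge i (j + 1) with h1 | h2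
        · exact (ihj (by omega) (by omega)).trans (hf j (by omega)).le
        · have : i = j + 1 := by omega
          exact this ▸ le_rfl
    have hcs : ∀ {p q : Submodule R M}, p ≤ N → q ≤ N → p < q →
        Submodule.comap N.subtype p < Submodule.comap N.subtype q := by
      intro p q hp hq hpq
      refine lt_of_le_of_ne (Submodule.comap_mono hpq.le) (fun he => hpq.ne ?_)
      have h1 := congrArg (Submodule.map N.subtype) he
      rwa [Submodule.map_comap_subtype, Submodule.map_comap_subtype,
        inf_eq_right.mpr hp, inf_eq_right.mpr hq] at h1
    have hsc : ∀ p : Submodule R M, p ⊔ N = N ∨ p ⊔ N = ⊤ := by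
      intro p
      rcases (inferInstance : IsSimpleModule R (M ⧸ N)).1.2 (Submodule.map N.mkQ p)
        with h1 | h1
      · left
        have := congrArg (Submodule.comap N.mkQ) h1
        rwa [Submodule.comap_map_eq, Submodule.ker_mkQ, Submodule.comap_bot,
          Submodule.ker_mkQ] at this
      · right
        have := congrArg (Submodule.comap N.mkQ) h1
        rwa [Submodule.comap_map_eq, Submodule.ker_mkQ, Submodule.comap_top] at this
    have hjump : ∀ j, j < m → ¬ g j < g (j + 1) → f j ⊔ N = N ∧ f (j + 1) ⊔ N = ⊤ := by
      intro j hj hbad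
      have hle : g j ≤ g (j + 1) := Submodule.comap_mono (hf j hj).le
      have hgeq : g j = g (j + 1) := by
        rcases hle.lt_or_eq with h1 | h1
        · exact absurd h1 hbad
        · exact h1
      have hinf : f j ⊓ N = f (j + 1) ⊓ N := by
        have := congrArg (Submodule.map N.subtype) hgeq
        rwa [Submodule.map_comap_subtype, Submodule.map_comap_subtype,
          inf_comm (a := N), inf_comm (a := N)] at this
      have hsupne : f j ⊔ N ≠ f (j + 1) ⊔ N := by
        intro he
        exact (hf j hj).ne (eq_of_le_of_inf_sup (hf j hj).le hinf he)
      rcases hsc (f j) with h1 | h1 <;> rcases hsc (f (j + 1)) with h2 | h2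
      · exact absurd (h1.trans h2.symm) hsupne
      · exact ⟨h1, h2⟩
      · exfalso
        have hl : f j ⊔ N ≤ f (j + 1) ⊔ N := sup_le_sup_right (hf j hj).le N
        rw [h1, h2] at hl
        have hNt : N = ⊤ := le_antisymm le_top hl
        exact hsupne (by rw [h1, h2, hNt])
      · exact absurd (h1.trans h2.symm) hsupne
    by_cases hall : ∀ i, i < m → g i < g (i + 1)
    · exact absurd (hn g m (fun i hi => hall i hi)) (by omega)
    · push_neg at hall
      obtain ⟨i₀, hi₀m, hbad⟩ := hall
      obtain ⟨hA, hB⟩ := hjump i₀ hi₀m hbad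
      have hstrict : ∀ i, i < m → i ≠ i₀ → g i < g (i + 1) := by
        intro i him hne
        by_contra hbad2
        obtain ⟨hA', hB'⟩ := hjump i him hbad2
        have hNtop : N ≠ ⊤ := by
          intro hNt
          exact hbad (hcs (by rw [hNt]; exact le_top) (by rw [hNt]; exact le_top)
            (hf i₀ hi₀m))
        rcases Nat.lt_or_ge i i₀ with hlt | hge
        · have h5 : f (i + 1) ⊔ N ≤ f i₀ ⊔ N :=
            sup_le_sup_right (hmono (i + 1) i₀ (by omega) (by omega)) N
          rw [hB', hA] at h5
          exact hNtop (le_antisymm le_top h5)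
        · have h5 : f (i₀ + 1) ⊔ N ≤ f i ⊔ N :=
            sup_le_sup_right (hmono (i₀ + 1) i (by omega) (by omega)) N
          rw [hB, hA'] at h5
          exact hNtop (le_antisymm le_top h5)
      have hGs : ∀ j, j < m - 1 →
          (fun j => if j ≤ i₀ then g j else g (j + 1)) j <
          (fun j => if j ≤ i₀ then g j else g (j + 1)) (j + 1) := by
        intro j hj
        simp only
        rcases Nat.lt_or_ge (j + 1) (i₀ + 1) with h1 | h1
        · rw [if_pos (by omega), if_pos (by omega)]
          exact hstrict j (by omega) (by omega)
        rcases Nat.lt_or_ge j (i₀ + 1) with h2 | h2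
        · have hji : j = i₀ := by omega
          rw [if_pos (by omega), if_neg (by omega)]
          subst hji
          calc g j ≤ g (j + 1) := Submodule.comap_mono (hf j (by omega)).le
          _ < g (j + 1 + 1) := hstrict (j + 1) (by omega) (by omega)
        · rw [if_neg (by omega), if_neg (by omega)]
          exact hstrict (j + 1) (by omega) (by omega)
      exact absurd (hn _ (m - 1) hGs) (by omega)

end Cbnd

section Split

variable {R : Type u} [Ring R]
variable {s : ℕ} {E : Fin s → Type v} [∀ i, AddCommGroup (E i)] [∀ i, Module R (E i)]

lemma exists_proper_submodule {Y : Type v} [AddCommGroup Y] [Module R Y]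
    (hnt : Nontrivial Y) (hns : ¬ IsSimpleModule R Y) :
    ∃ c : Submodule R Y, c ≠ ⊥ ∧ c ≠ ⊤ := by
  by_contra hc
  push_neg at hc
  refine hns ?_
  have hbt : (⊥ : Submodule R Y) ≠ ⊤ := by
    intro h
    obtain ⟨x, hx⟩ := exists_ne (0 : Y)
    exact hx ((Submodule.mem_bot R).mp (h ▸ Submodule.mem_top))
  exact { exists_pair_ne := ⟨⊥, ⊤, hbt⟩
          eq_bot_or_eq_top := fun c => or_iff_not_imp_left.mpr (hc c) }

lemma split_lemma (k : Fin s) (hsimpleE : ∀ i, IsSimpleModule R (E i))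
    (hext : ∀ i j : Fin s, i ≠ j → ∀ (X : Type v) [AddCommGroup X] [Module R X]
      (f : E j →ₗ[R] X) (g : X →ₗ[R] E i),
        Function.Injective f → Function.Surjective g →
        LinearMap.range f = LinearMap.ker g →
          ∃ sec : E i →ₗ[R] X, g.comp sec = LinearMap.id) :
    ∀ (a b : ℕ) (X : Type v) [AddCommGroup X] [Module R X] (V : Submodule R X),
      cbnd R a ↥V → cbnd R b (X ⧸ V) →
      SubFac E {k}ᶜ V → SubFac E {k} (⊤ : Submodule R (X ⧸ V)) →
      ∃ W : Submodule R X, W ⊓ V = ⊥ ∧ W ⊔ V = ⊤ := by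
  intro a
  induction a using Nat.strong_induction_on with
  | _ a iha =>
  intro b
  induction b using Nat.strong_induction_on with
  | _ b ihb =>
  intro X _ _ V hca hcb hV hQ
  by_cases hVbot : V = ⊥
  · exact ⟨⊤, by simp [hVbot], by simp⟩
  by_cases hVtop : V = ⊤
  · exact ⟨⊥, by simp, by simp [hVtop]⟩
  have hVnt : Nontrivial ↥V := Submodule.nontrivial_iff_ne_bot.mpr hVbot
  have hQnt : Nontrivial (X ⧸ V) :=
    Submodule.Quotient.nontrivial_iff.mpr (lt_top_iff_ne_top.mpr hVtop).ne
  by_cases hQsimp : IsSimpleModule R (X ⧸ V)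
  · by_cases hVsimp : IsSimpleModule R ↥V
    · -- base case: apply the Ext hypothesis
      obtain ⟨j, hj, ⟨eV⟩⟩ := hV V le_rfl ↥V LinearMap.id Function.surjective_id hVsimp
      obtain ⟨i', hi', ⟨eQ'⟩⟩ := hQ ⊤ le_rfl (X ⧸ V)
        (Submodule.topEquiv.toLinearMap) Submodule.topEquiv.surjective hQsimp
      have hik : i' = k := hi'
      subst hik
      have hkj : i' ≠ j := fun h => hj (Set.mem_singleton_iff.mpr h.symm)
      have hrange : LinearMap.range (V.subtype ∘ₗ eV.symm.toLinearMap) =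
          LinearMap.ker (eQ'.toLinearMap ∘ₗ V.mkQ) := by
        rw [LinearMap.range_comp, LinearEquiv.range, Submodule.map_top,
          Submodule.range_subtype, LinearMap.ker_comp, LinearEquiv.ker,
          Submodule.comap_bot, Submodule.ker_mkQ]
      obtain ⟨sec, hsec⟩ := hext i' j hkj X (V.subtype ∘ₗ eV.symm.toLinearMap)
        (eQ'.toLinearMap ∘ₗ V.mkQ) (V.injective_subtype.comp eV.symm.injective)
        (eQ'.surjective.comp V.mkQ_surjective) hrange
      refine ⟨LinearMap.range sec, ?_, ?_⟩
      · rw [eq_bot_iff]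
        rintro x ⟨⟨t, rfl⟩, hxV⟩
        have h0 : (eQ'.toLinearMap ∘ₗ V.mkQ) (sec t) = t := LinearMap.congr_fun hsec t
        have h1 : V.mkQ (sec t) = 0 := by
          rw [Submodule.mkQ_apply, Submodule.Quotient.mk_eq_zero]
          exact hxV
        have h2 : t = 0 := by
          rw [← h0]
          simp [h1]
        rw [Submodule.mem_bot, h2, map_zero]
      · rw [eq_top_iff]
        intro x _
        set t := (eQ'.toLinearMap ∘ₗ V.mkQ) x with ht
        have h0 : (eQ'.toLinearMap ∘ₗ V.mkQ) (sec t) = t := LinearMap.congr_fun hsec t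
        have hx : x - sec t ∈ V := by
          have h1 : V.mkQ (x - sec t) = 0 := by
            apply eQ'.injective
            have h2 : eQ' (V.mkQ (x - sec t)) = (eQ'.toLinearMap ∘ₗ V.mkQ) (x - sec t) := rfl
            rw [h2, map_sub, h0, ← ht, sub_self, map_zero]
          rwa [Submodule.mkQ_apply, Submodule.Quotient.mk_eq_zero] at h1
        exact Submodule.mem_sup.mpr ⟨sec t, ⟨t, rfl⟩, x - sec t, hx, by abel⟩
    · -- V is not simple: chop off a piece of V
      obtain ⟨c, hcb', hct⟩ := exists_proper_submodule hVnt hVsimp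
      set V₁ := c.map V.subtype with hV₁def
      have hV₁le : V₁ ≤ V := Submodule.map_subtype_le V c
      have hV₁bot : V₁ ≠ ⊥ := by
        intro h
        apply hcb'
        have := congrArg (Submodule.comap V.subtype) h
        rwa [Submodule.comap_map_eq, Submodule.ker_subtype, sup_bot_eq,
          Submodule.comap_bot, Submodule.ker_subtype] at this
      have hV₁neV : V₁ ≠ V := by
        intro h
        apply hct
        have := congrArg (Submodule.comap V.subtype) h
        rwa [Submodule.comap_map_eq, Submodule.ker_subtype, sup_bot_eq,
          Submodule.comap_subtype_self] at this
      have e1 : ((X ⧸ V₁) ⧸ (V.map V₁.mkQ)) ≃ₗ[R] X ⧸ V :=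
        Submodule.quotientQuotientEquivQuotient V₁ V hV₁le
      have ha0 : 0 < a := cb_pos hca hVnt
      have hcomapne : (LinearMap.ker V₁.mkQ).comap V.subtype ≠ ⊥ := by
        rw [Submodule.ker_mkQ, Submodule.ne_bot_iff]
        rw [Submodule.ne_bot_iff] at hV₁bot
        obtain ⟨x, hx, hxne⟩ := hV₁bot
        exact ⟨⟨x, hV₁le hx⟩, hx, fun h0 => hxne (congrArg Subtype.val h0)⟩
      have hcaV' : cbnd R (a - 1) ↥(V.map V₁.mkQ) :=
        cb_congr (quotMapEquiv V₁.mkQ V) (cb_quot hca _ hcomapne)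
      have hcbZ : cbnd R b ((X ⧸ V₁) ⧸ (V.map V₁.mkQ)) := cb_congr e1.symm hcb
      obtain ⟨Wb, hWb1, hWb2⟩ := iha (a - 1) (by omega) b (X ⧸ V₁) (V.map V₁.mkQ)
        hcaV' hcbZ (subFac_map _ hV) (subFac_top_congr e1.symm hQ)
      set W₁ := Wb.comap V₁.mkQ with hW₁def
      have hV₁W₁ : V₁ ≤ W₁ := by
        intro x hx
        show V₁.mkQ x ∈ Wb
        have h5 : V₁.mkQ x = 0 := by
          rw [Submodule.mkQ_apply, Submodule.Quotient.mk_eq_zero]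
          exact hx
        rw [h5]
        exact zero_mem _
      have hW₁V : W₁ ⊓ V = V₁ := by
        apply le_antisymm
        · rintro x ⟨hxW, hxV⟩
          have h6 : V₁.mkQ x ∈ Wb ⊓ (V.map V₁.mkQ) := ⟨hxW, Submodule.mem_map_of_mem hxV⟩
          rw [hWb1, Submodule.mem_bot] at h6
          have h7 : x ∈ LinearMap.ker V₁.mkQ := h6
          rwa [Submodule.ker_mkQ] at h7
        · exact le_inf hV₁W₁ hV₁le
      have hW₁supV : W₁ ⊔ V = ⊤ := by
        rw [eq_top_iff]
        intro x _
        have h7 : V₁.mkQ x ∈ Wb ⊔ (V.map V₁.mkQ) := by rw [hWb2]; exact Submodule.mem_top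
        rw [Submodule.mem_sup] at h7
        obtain ⟨w, hw, vb, ⟨v, hv, rfl⟩, hwv⟩ := h7
        refine Submodule.mem_sup.mpr ⟨x - v, ?_, v, hv, by abel⟩
        show V₁.mkQ (x - v) ∈ Wb
        have h8 : V₁.mkQ (x - v) = w := by
          rw [map_sub, ← hwv]
          abel
        rw [h8]
        exact hw
      -- second recursive call, inside W₁
      have hcV₁sub : (V₁.comap V.subtype) ≠ ⊤ := by
        intro h
        apply hV₁neV
        have := congrArg (Submodule.map V.subtype) h
        rw [Submodule.map_comap_subtype, inf_eq_right.mpr hV₁le, Submodule.map_top,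
          Submodule.range_subtype] at this
        exact this
      have hcV₁ : cbnd R (a - 1) ↥(V₁.comap W₁.subtype) :=
        cb_congr ((Submodule.comapSubtypeEquivOfLe hV₁le).trans
          (Submodule.comapSubtypeEquivOfLe hV₁W₁).symm) (cb_sub hca _ hcV₁sub)
      have h8 : W₁.map V₁.mkQ = Wb := by
        rw [Submodule.map_comap_eq, LinearMap.range_eq_top.mpr V₁.mkQ_surjective, top_inf_eq]
      have E2 : (↥W₁ ⧸ V₁.comap W₁.subtype) ≃ₗ[R] X ⧸ V :=
        (((Submodule.quotEquivOfEq _ _ (by rw [Submodule.ker_mkQ])).trans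
          (quotMapEquiv V₁.mkQ W₁)).trans
            ((LinearEquiv.ofEq _ _ h8).trans
              (complEquiv Wb (V.map V₁.mkQ) hWb1 hWb2))).trans e1
      have hcW₁q : cbnd R b (↥W₁ ⧸ V₁.comap W₁.subtype) := cb_congr E2.symm hcb
      have facV₁' : SubFac E {k}ᶜ (V₁.comap W₁.subtype) := by
        refine subFac_of_disjoint_ker W₁.subtype (by rw [Submodule.ker_subtype, inf_bot_eq]) ?_
        have h9 : (V₁.comap W₁.subtype).map W₁.subtype = V₁ := by
          rw [Submodule.map_comap_subtype, inf_eq_right.mpr hV₁W₁]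
        rw [h9]
        exact subFac_mono hV₁le hV
      obtain ⟨W', hW'1, hW'2⟩ := iha (a - 1) (by omega) b ↥W₁ (V₁.comap W₁.subtype)
        hcV₁ hcW₁q facV₁' (subFac_top_congr E2.symm hQ)
      refine ⟨W'.map W₁.subtype, ?_, ?_⟩
      · have h10 : W'.map W₁.subtype ≤ W₁ := Submodule.map_subtype_le W₁ W'
        apply le_antisymm _ bot_le
        rintro x ⟨hxW, hxV⟩
        have hxV₁ : x ∈ V₁ := by rw [← hW₁V]; exact ⟨h10 hxW, hxV⟩
        obtain ⟨y, hy, rfl⟩ := hxW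
        have h11 : y ∈ W' ⊓ V₁.comap W₁.subtype := ⟨hy, hxV₁⟩
        rw [hW'1, Submodule.mem_bot] at h11
        rw [Submodule.mem_bot, h11, map_zero]
      · have h11 : W'.map W₁.subtype ⊔ V₁ = W₁ := by
          have := congrArg (Submodule.map W₁.subtype) hW'2
          rwa [Submodule.map_sup, Submodule.map_comap_subtype, inf_eq_right.mpr hV₁W₁,
            Submodule.map_top, Submodule.range_subtype] at this
        rw [eq_top_iff, ← hW₁supV]
        exact sup_le (le_trans (le_of_eq h11.symm) (sup_le_sup_left hV₁le _)) le_sup_right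
  · -- X ⧸ V is not simple: chop off a piece of the quotient
    obtain ⟨C₁, hC₁bot, hC₁top⟩ := exists_proper_submodule hQnt hQsimp
    have hb0 : 0 < b := cb_pos hcb hQnt
    set X₁ := C₁.comap V.mkQ with hX₁def
    have hVX₁ : V ≤ X₁ := by
      intro x hx
      show V.mkQ x ∈ C₁
      have h5 : V.mkQ x = 0 := by
        rw [Submodule.mkQ_apply, Submodule.Quotient.mk_eq_zero]
        exact hx
      rw [h5]
      exact zero_mem _
    have hmapX₁ : X₁.map V.mkQ = C₁ := by
      rw [Submodule.map_comap_eq, LinearMap.range_eq_top.mpr V.mkQ_surjective, top_inf_eq]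
    -- first recursive call, inside X₁
    have hcV' : cbnd R a ↥(V.comap X₁.subtype) :=
      cb_congr (Submodule.comapSubtypeEquivOfLe hVX₁).symm hca
    have hcC₁ : cbnd R (b - 1) ↥C₁ := cb_sub hcb C₁ hC₁top
    have E3 : (↥X₁ ⧸ V.comap X₁.subtype) ≃ₗ[R] ↥C₁ :=
      ((Submodule.quotEquivOfEq _ _ (by rw [Submodule.ker_mkQ])).trans
        (quotMapEquiv V.mkQ X₁)).trans (LinearEquiv.ofEq _ _ hmapX₁)
    have hcq : cbnd R (b - 1) (↥X₁ ⧸ V.comap X₁.subtype) := cb_congr E3.symm hcC₁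
    have facV' : SubFac E {k}ᶜ (V.comap X₁.subtype) := by
      refine subFac_of_disjoint_ker X₁.subtype (by rw [Submodule.ker_subtype, inf_bot_eq]) ?_
      rw [Submodule.map_comap_subtype, inf_eq_right.mpr hVX₁]
      exact hV
    have facC₁top : SubFac E {k} (⊤ : Submodule R ↥C₁) := by
      refine subFac_of_disjoint_ker C₁.subtype (by rw [Submodule.ker_subtype, inf_bot_eq]) ?_
      rw [Submodule.map_top, Submodule.range_subtype]
      exact subFac_mono le_top hQ
    obtain ⟨W₁', hW₁'1, hW₁'2⟩ := ihb (b - 1) (by omega) ↥X₁ (V.comap X₁.subtype) hcV' hcq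
      facV' (subFac_top_congr E3.symm facC₁top)
    set W₁ := W₁'.map X₁.subtype with hW₁def
    have hW₁X₁ : W₁ ≤ X₁ := Submodule.map_subtype_le X₁ W₁'
    have hW₁V : W₁ ⊓ V = ⊥ := by
      apply le_antisymm _ bot_le
      rintro x ⟨hxW, hxV⟩
      obtain ⟨y, hy, rfl⟩ := hxW
      have h12 : y ∈ W₁' ⊓ V.comap X₁.subtype := ⟨hy, hxV⟩
      rw [hW₁'1, Submodule.mem_bot] at h12
      rw [Submodule.mem_bot, h12, map_zero]
    have hW₁supX : W₁ ⊔ V = X₁ := by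
      have := congrArg (Submodule.map X₁.subtype) hW₁'2
      rwa [Submodule.map_sup, Submodule.map_comap_subtype, inf_eq_right.mpr hVX₁,
        Submodule.map_top, Submodule.range_subtype] at this
    have hmapV₂ : X₁.map W₁.mkQ = V.map W₁.mkQ := by
      rw [← hW₁supX, Submodule.map_sup]
      have h13 : W₁.map W₁.mkQ = ⊥ := by
        rw [eq_bot_iff]
        rintro y ⟨x, hx, rfl⟩
        rw [Submodule.mem_bot, Submodule.mkQ_apply, Submodule.Quotient.mk_eq_zero]
        exact hx
      rw [h13, bot_sup_eq]
    have hdisjV : V ⊓ LinearMap.ker W₁.mkQ = ⊥ := by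
      rw [Submodule.ker_mkQ, inf_comm]
      exact hW₁V
    have hcV₂ : cbnd R a ↥(X₁.map W₁.mkQ) := by
      rw [hmapV₂]
      exact cb_congr (restrictMapEquiv W₁.mkQ V hdisjV) hca
    have e4 : ((X ⧸ W₁) ⧸ X₁.map W₁.mkQ) ≃ₗ[R] X ⧸ X₁ :=
      Submodule.quotientQuotientEquivQuotient W₁ X₁ hW₁X₁
    have e5 : ((X ⧸ V) ⧸ C₁) ≃ₗ[R] X ⧸ X₁ :=
      (Submodule.quotEquivOfEq C₁ (X₁.map V.mkQ) hmapX₁.symm).trans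
        (Submodule.quotientQuotientEquivQuotient V X₁ hVX₁)
    have hc2 : cbnd R (b - 1) ((X ⧸ W₁) ⧸ X₁.map W₁.mkQ) :=
      cb_congr (e5.trans e4.symm) (cb_quot hcb C₁ hC₁bot)
    have facV₂ : SubFac E {k}ᶜ (X₁.map W₁.mkQ) := by
      rw [hmapV₂]
      exact subFac_map _ hV
    have factop2 : SubFac E {k} (⊤ : Submodule R ((X ⧸ W₁) ⧸ X₁.map W₁.mkQ)) := by
      have h13 : SubFac E {k} (⊤ : Submodule R ((X ⧸ V) ⧸ C₁)) := by
        have := subFac_map C₁.mkQ hQ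
        rwa [Submodule.map_top, LinearMap.range_eq_top.mpr C₁.mkQ_surjective] at this
      exact subFac_top_congr (e5.trans e4.symm) h13
    obtain ⟨W₂', hW₂'1, hW₂'2⟩ := ihb (b - 1) (by omega) (X ⧸ W₁) (X₁.map W₁.mkQ)
      hcV₂ hc2 facV₂ factop2
    refine ⟨W₂'.comap W₁.mkQ, ?_, ?_⟩
    · apply le_antisymm _ bot_le
      rintro x ⟨hxW, hxV⟩
      have h14 : W₁.mkQ x ∈ W₂' ⊓ X₁.map W₁.mkQ :=
        ⟨hxW, Submodule.mem_map_of_mem (hVX₁ hxV)⟩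
      rw [hW₂'1, Submodule.mem_bot] at h14
      have h15 : x ∈ LinearMap.ker W₁.mkQ := LinearMap.mem_ker.mpr h14
      rw [Submodule.ker_mkQ] at h15
      have h16 : x ∈ W₁ ⊓ V := ⟨h15, hxV⟩
      rwa [hW₁V] at h16
    · rw [eq_top_iff]
      intro x _
      have h16 : W₁.mkQ x ∈ W₂' ⊔ X₁.map W₁.mkQ := by
        rw [hW₂'2]
        exact Submodule.mem_top
      rw [hmapV₂, Submodule.mem_sup] at h16
      obtain ⟨w, hw, vb, ⟨v, hv, rfl⟩, hwv⟩ := h16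
      refine Submodule.mem_sup.mpr ⟨x - v, ?_, v, hv, by abel⟩
      show W₁.mkQ (x - v) ∈ W₂'
      have h17 : W₁.mkQ (x - v) = w := by
        rw [map_sub, ← hwv]
        abel
      rw [h17]
      exact hw

end Split

section Complete

variable {R : Type u} [Ring R]
variable {s : ℕ} {E : Fin s → Type v} [∀ i, AddCommGroup (E i)] [∀ i, Module R (E i)]

lemma complete_lemma (hsimpleE : ∀ i, IsSimpleModule R (E i))
    (hext : ∀ i j : Fin s, i ≠ j → ∀ (X : Type v) [AddCommGroup X] [Module R X]
      (f : E j →ₗ[R] X) (g : X →ₗ[R] E i),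
        Function.Injective f → Function.Surjective g →
        LinearMap.range f = LinearMap.ker g →
          ∃ sec : E i →ₗ[R] X, g.comp sec = LinearMap.id) :
    ∀ (n : ℕ) (X : Type v) [AddCommGroup X] [Module R X] [IsNoetherian R X],
      cbnd R n X → SubFac E Set.univ (⊤ : Submodule R X) →
      ∃ N : Fin s → Submodule R X, (∀ i, SubFac E {i} (N i)) ∧ (⨆ i, N i) = ⊤ := by
  intro n
  induction n using Nat.strong_induction_on with
  | _ n ihn =>
  intro X _ _ _ hc hexh
  by_cases hX : Subsingleton X
  · refine ⟨fun _ => ⊥, fun i => subFac_bot, ?_⟩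
    have htop : (⊤ : Submodule R X) = ⊥ := by
      ext x
      simp only [Submodule.mem_top, Submodule.mem_bot, true_iff]
      exact Subsingleton.elim x 0
    rw [htop]
    exact le_antisymm (iSup_le fun i => le_rfl) bot_le
  · have hnt : Nontrivial X := not_subsingleton_iff_nontrivial.mp hX
    have hbt : (⊥ : Submodule R X) ≠ ⊤ := by
      intro h
      obtain ⟨x, hx⟩ := exists_ne (0 : X)
      exact hx ((Submodule.mem_bot R).mp (h ▸ Submodule.mem_top))
    haveI : IsCoatomic (Submodule R X) := isCoatomic_of_orderTop_gt_wellFounded wellFounded_gt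
    obtain h | ⟨N₀, hN₀, -⟩ := eq_top_or_exists_le_coatom (⊥ : Submodule R X)
    · exact absurd h hbt
    have hsimpleQ : IsSimpleModule R (X ⧸ N₀) := isSimpleModule_iff_isCoatom.mpr hN₀
    have hmkQt : Function.Surjective (N₀.mkQ ∘ₗ (⊤ : Submodule R X).subtype) := by
      intro y
      obtain ⟨x, rfl⟩ := N₀.mkQ_surjective y
      exact ⟨⟨x, trivial⟩, rfl⟩
    obtain ⟨k, -, ⟨eQ⟩⟩ := hexh ⊤ le_rfl (X ⧸ N₀)
      (N₀.mkQ ∘ₗ (⊤ : Submodule R X).subtype) hmkQt hsimpleQ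
    have hn0 : 0 < n := cb_pos hc hnt
    have hcN₀ : cbnd R (n - 1) ↥N₀ := cb_sub hc N₀ hN₀.1
    have hexhN₀ : SubFac E Set.univ (⊤ : Submodule R ↥N₀) := by
      refine subFac_of_disjoint_ker N₀.subtype (by rw [Submodule.ker_subtype, inf_bot_eq]) ?_
      rw [Submodule.map_top, Submodule.range_subtype]
      exact subFac_mono le_top hexh
    obtain ⟨P', hP'fac, hP'sup⟩ := ihn (n - 1) (by omega) ↥N₀ hcN₀ hexhN₀
    set P : Fin s → Submodule R X := fun i => (P' i).map N₀.subtype with hPdef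
    have hPfac : ∀ i, SubFac E {i} (P i) := fun i => subFac_map _ (hP'fac i)
    have hPsup : (⨆ i, P i) = N₀ := by
      rw [hPdef, ← Submodule.map_iSup, hP'sup, Submodule.map_top, Submodule.range_subtype]
    set V : Submodule R X := ⨆ j : {j : Fin s // j ≠ k}, P j with hVdef
    have hVle : V ≤ N₀ := iSup_le fun j => le_trans (le_iSup P j.1) hPsup.le
    have hPkV : P k ⊔ V = N₀ := by
      apply le_antisymm
      · exact sup_le (le_trans (le_iSup P k) hPsup.le) hVle
      · rw [← hPsup]
        refine iSup_le fun i => ?_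
        by_cases hik : i = k
        · subst hik
          exact le_sup_left
        · exact le_trans (le_iSup (fun j : {j : Fin s // j ≠ k} => P j) ⟨i, hik⟩) le_sup_right
    have hVfac : SubFac E ({k}ᶜ : Set (Fin s)) V :=
      subFac_iSup fun j => subFac_mono_set
        (fun x hx => by
          rw [Set.mem_singleton_iff] at hx
          subst hx
          exact j.2) (hPfac j.1)
    have hmapV : V.map V.mkQ = ⊥ := by
      rw [eq_bot_iff]
      rintro y ⟨x, hx, rfl⟩
      rw [Submodule.mem_bot, Submodule.mkQ_apply, Submodule.Quotient.mk_eq_zero]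
      exact hx
    have hNbarfac : SubFac E {k} (N₀.map V.mkQ) := by
      have h3 : N₀.map V.mkQ = (P k).map V.mkQ := by
        rw [← hPkV, Submodule.map_sup, hmapV, sup_bot_eq]
      rw [h3]
      exact subFac_map _ (hPfac k)
    have eqq : ((X ⧸ V) ⧸ N₀.map V.mkQ) ≃ₗ[R] X ⧸ N₀ :=
      Submodule.quotientQuotientEquivQuotient V N₀ hVle
    have hQtopQ : SubFac E {k} (⊤ : Submodule R ((X ⧸ V) ⧸ N₀.map V.mkQ)) :=
      subFac_top_of_equiv k (hsimpleE k) ⟨eqq.trans eQ⟩ rfl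
    have hQtop : SubFac E {k} (⊤ : Submodule R (X ⧸ V)) := by
      have h1 : SubFac E {k} (LinearMap.ker (N₀.map V.mkQ).mkQ) := by
        rw [Submodule.ker_mkQ]
        exact hNbarfac
      have h2 := subFac_comap (N₀.map V.mkQ).mkQ h1 hQtopQ
      rwa [Submodule.comap_top] at h2
    obtain ⟨W, hW1, hW2⟩ := split_lemma k hsimpleE hext n n X V (cb_sub' hc V)
      (cb_quot' hc V) hVfac hQtop
    have hWfac : SubFac E {k} W := by
      refine subFac_of_disjoint_ker V.mkQ (by rw [Submodule.ker_mkQ]; exact hW1) ?_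
      have h4 : W.map V.mkQ = ⊤ := by
        have h2 := congrArg (Submodule.map V.mkQ) hW2
        rwa [Submodule.map_sup, hmapV, sup_bot_eq, Submodule.map_top,
          LinearMap.range_eq_top.mpr V.mkQ_surjective] at h2
      rw [h4]
      exact hQtop
    classical
    refine ⟨fun i => if i = k then W ⊔ P k else P i, fun i => ?_, ?_⟩
    · dsimp only
      by_cases hik : i = k
      · subst hik
        rw [if_pos rfl]
        exact subFac_sup hWfac (hPfac i)
      · rw [if_neg hik]
        exact hPfac i
    · rw [eq_top_iff, ← hW2]
      have hk1 : W ⊔ P k ≤ ⨆ i, (if i = k then W ⊔ P k else P i) := by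
        have := le_iSup (fun i => if i = k then W ⊔ P k else P i) k
        rwa [if_pos rfl] at this
      have hk2 : V ≤ ⨆ i, (if i = k then W ⊔ P k else P i) := by
        refine iSup_le fun j => ?_
        have := le_iSup (fun i => if i = k then W ⊔ P k else P i) j.1
        rwa [if_neg j.2] at this
      exact sup_le (le_sup_left.trans hk1) hk2

end Complete

section Translate

variable {R : Type u} [Ring R]
variable {s : ℕ} {E : Fin s → Type v} [∀ i, AddCommGroup (E i)] [∀ i, Module R (E i)]

lemma subFac_iff_subquot {M : Type v} [AddCommGroup M] [Module R M] (T : Set (Fin s))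
    (N : Submodule R M) :
    SubFac E T N ↔ ∀ A B : Submodule R M, A ≤ B → B ≤ N →
      IsSimpleModule R (↥B ⧸ (A.comap B.subtype)) →
        ∃ i ∈ T, Nonempty ((↥B ⧸ (A.comap B.subtype)) ≃ₗ[R] E i) := by
  constructor
  · intro h A B hAB hBN hs
    exact h B hBN _ (A.comap B.subtype).mkQ (Submodule.mkQ_surjective _) hs
  · intro h B hBN T' _ _ φ hφ hs
    haveI := hs
    have hA : ((LinearMap.ker φ).map B.subtype).comap B.subtype = LinearMap.ker φ :=
      Submodule.comap_map_eq_of_injective B.injective_subtype _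
    have hsimp : IsSimpleModule R (↥B ⧸ ((LinearMap.ker φ).map B.subtype).comap B.subtype) := by
      rw [hA]
      exact IsSimpleModule.congr (φ.quotKerEquivOfSurjective hφ)
    obtain ⟨i, hi, ⟨e⟩⟩ := h ((LinearMap.ker φ).map B.subtype) B
      (Submodule.map_subtype_le B _) hBN hsimp
    exact ⟨i, hi, ⟨(φ.quotKerEquivOfSurjective hφ).symm.trans
      ((Submodule.quotEquivOfEq _ _ hA.symm).trans e)⟩⟩

end Translate

/-- Let `M` be a finite length module over a ring `R` and let
`E 0, …, E (s-1)` be representatives of the isomorphism classes of the simple composition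
factors of `M`.  Let `Mᵢ` be the maximal submodule of `M` all of whose composition factors
are isomorphic to `E i` (the sup of all `E i`-isotypic submodules).  If
`Ext¹_R(E i, E j) = 0` for `i ≠ j` (i.e. every extension of `E i` by `E j` splits),
then `M` is the internal direct sum of its isotypic components `M = M₁ ⊕ ⋯ ⊕ M_s`. -/
theorem isotypic_decomposition_of_ext_vanishing
    (R : Type u) [Ring R] (M : Type v) [AddCommGroup M] [Module R M]
    (hlen : IsFiniteLength R M)
    (s : ℕ) (E : Fin s → Type v) [∀ i, AddCommGroup (E i)] [∀ i, Module R (E i)]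
    (hsimple : ∀ i, IsSimpleModule R (E i))
    (hpairwise : ∀ i j, i ≠ j → IsEmpty (E i ≃ₗ[R] E j))
    -- every composition factor of `M` is isomorphic to some `E i`:
    (hexhaust : ∀ A B : Submodule R M, A ≤ B →
      IsSimpleModule R (↥B ⧸ (A.comap B.subtype)) →
        ∃ i, Nonempty ((↥B ⧸ (A.comap B.subtype)) ≃ₗ[R] E i))
    -- `Ext¹_R(E i, E j) = 0` for `i ≠ j`: every extension of `E i` by `E j` splits:
    (hext : ∀ i j, i ≠ j → ∀ (X : Type v) [AddCommGroup X] [Module R X]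
      (f : E j →ₗ[R] X) (g : X →ₗ[R] E i),
        Function.Injective f → Function.Surjective g →
        LinearMap.range f = LinearMap.ker g →
          ∃ sec : E i →ₗ[R] X, g.comp sec = LinearMap.id) :
    DirectSum.IsInternal
      (fun i : Fin s => sSup {N : Submodule R M | IsIsotypicOf R (E i) N}) := by
  classical
  haveI hno : IsNoetherian R M := (isFiniteLength_iff_isNoetherian_isArtinian.mp hlen).1
  haveI har : IsArtinian R M := (isFiniteLength_iff_isNoetherian_isArtinian.mp hlen).2
  have hisoty : ∀ (i : Fin s) (N : Submodule R M),
      IsIsotypicOf R (E i) N ↔ SubFac E {i} N := by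
    intro i N
    rw [subFac_iff_subquot]
    constructor
    · intro h A B hAB hBN hs
      exact ⟨i, rfl, h A B hAB hBN hs⟩
    · intro h A B hAB hBN hs
      obtain ⟨j, hj, he⟩ := h A B hAB hBN hs
      rw [Set.mem_singleton_iff] at hj
      subst hj
      exact he
  have hexh : SubFac E Set.univ (⊤ : Submodule R M) := by
    rw [subFac_iff_subquot]
    intro A B hAB _ hs
    obtain ⟨i, hi⟩ := hexhaust A B hAB hs
    exact ⟨i, trivial, hi⟩
  obtain ⟨n, hc⟩ := cb_exists hlen
  obtain ⟨Nf, hNfac, hNsup⟩ := complete_lemma hsimple hext n M hc hexh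
  set Mi : Fin s → Submodule R M := fun i => sSup {N | IsIsotypicOf R (E i) N} with hMidef
  have hMiFac : ∀ i, SubFac E {i} (Mi i) := fun i =>
    subFac_sSup (fun N hN => (hisoty i N).mp hN)
  have hle : ∀ i, Nf i ≤ Mi i := fun i => le_sSup ((hisoty i (Nf i)).mpr (hNfac i))
  have hsup : (⨆ i, Mi i) = ⊤ := by
    apply le_antisymm le_top
    rw [← hNsup]
    exact iSup_mono hle
  have hind : iSupIndep Mi := by
    intro i
    rw [disjoint_iff]
    by_contra hne
    haveI : IsAtomic (Submodule R M) := isAtomic_of_orderBot_wellFounded_lt wellFounded_lt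
    obtain ⟨S, hatom, hSD⟩ :=
      (eq_bot_or_exists_atom_le (Mi i ⊓ ⨆ j, ⨆ (_ : j ≠ i), Mi j)).resolve_left hne
    have hSsimple : IsSimpleModule R ↥S := isSimpleModule_iff_isAtom.mpr hatom
    obtain ⟨i', hi', ⟨e1⟩⟩ := hMiFac i S (hSD.trans inf_le_left) ↥S LinearMap.id
      Function.surjective_id hSsimple
    rw [Set.mem_singleton_iff] at hi'
    subst hi'
    have hsupfac : SubFac E ({i'}ᶜ : Set (Fin s)) (⨆ j, ⨆ (_ : j ≠ i'), Mi j) :=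
      subFac_iSup fun j => subFac_iSup fun hj => subFac_mono_set
        (fun x hx => by
          rw [Set.mem_singleton_iff] at hx
          subst hx
          exact hj) (hMiFac j)
    obtain ⟨j, hj, ⟨e2⟩⟩ := hsupfac S (hSD.trans inf_le_right) ↥S LinearMap.id
      Function.surjective_id hSsimple
    exact (hpairwise i' j (fun h => hj (Set.mem_singleton_iff.mpr h.symm))).false
      (e1.symm.trans e2)
  exact (DirectSum.isInternal_submodule_iff_iSupIndep_and_iSup_eq_top _).mpr ⟨hind, hsup⟩
end

section
/- Let A be an abelian variety over ℚ_N with semistable reduction, p a prime different from N, T_p(A) its p-adic Tate module, σ a topological generator of the (pro-p cyclic) inertia image, and suppose (σ−1)²(T_p(A)) = 0. Let M_t be a ℤ_p-direct summand of T_p(A) containing (σ−1)(T_p(A)) with finite index, and suppose the conductor exponents satisfy length_{ℤ_p}((σ−1)(A[p])) = rank_{ℤ_p} M_t. Then length_{ℤ_p}((σ−1)(A[pⁿ])) = n · length_{ℤ_p}((σ−1)(A[p])) for all n ≥ 1, and (σ−1)(T_p(A)) = M_t. -/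
open Pointwise

variable {p : ℕ} [Fact p.Prime]

lemma TMCS.mem_smul_top {M : Type*} [AddCommGroup M] [Module ℤ_[p] M]
    (c : ℤ_[p]) (x : M) :
    x ∈ c • (⊤ : Submodule ℤ_[p] M) ↔ ∃ y : M, c • y = x := by
  rw [← SetLike.mem_coe, Submodule.coe_pointwise_smul]
  constructor
  · rintro ⟨y, -, rfl⟩; exact ⟨y, rfl⟩
  · rintro ⟨y, rfl⟩; exact ⟨y, trivial, rfl⟩

lemma TMCS.smul_top_eq_span (c : ℤ_[p]) :
    c • (⊤ : Submodule ℤ_[p] ℤ_[p]) = Ideal.span {c} := by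
  ext x
  rw [TMCS.mem_smul_top, Ideal.mem_span_singleton]
  constructor
  · rintro ⟨y, rfl⟩; exact Dvd.intro y rfl
  · rintro ⟨y, rfl⟩; exact ⟨y, rfl⟩

lemma TMCS.card_quot_base (n : ℕ) :
    Nat.card (ℤ_[p] ⧸ ((p : ℤ_[p]) ^ n • (⊤ : Submodule ℤ_[p] ℤ_[p]))) = p ^ n := by
  rw [TMCS.smul_top_eq_span]
  have hsurj : Function.Surjective (PadicInt.toZModPow n : ℤ_[p] →+* ZMod (p ^ n)) := by
    intro z
    haveI : NeZero (p ^ n) := ⟨pow_ne_zero n (Fact.out : p.Prime).ne_zero⟩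
    refine ⟨((z.val : ℕ) : ℤ_[p]), ?_⟩
    rw [map_natCast]
    exact ZMod.natCast_rightInverse z
  have e := RingHom.quotientKerEquivOfSurjective hsurj
  rw [← PadicInt.ker_toZModPow]
  rw [Nat.card_congr e.toEquiv, Nat.card_zmod]

lemma TMCS.pi_smul_top {ι : Type*} [Fintype ι] (c : ℤ_[p]) :
    c • (⊤ : Submodule ℤ_[p] (ι → ℤ_[p]))
      = Submodule.pi Set.univ (fun _ : ι => c • (⊤ : Submodule ℤ_[p] ℤ_[p])) := by
  ext x
  rw [TMCS.mem_smul_top, Submodule.mem_pi]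
  constructor
  · rintro ⟨y, rfl⟩ i -
    exact (TMCS.mem_smul_top c _).mpr ⟨y i, rfl⟩
  · intro h
    choose y hy using fun i => (TMCS.mem_smul_top c (x i)).mp (h i trivial)
    exact ⟨y, funext hy⟩

set_option synthInstance.maxHeartbeats 1000000 in
set_option maxHeartbeats 1000000 in
lemma TMCS.card_quot_basis {M : Type*} [AddCommGroup M] [Module ℤ_[p] M]
    {ι : Type*} [Fintype ι] [DecidableEq ι] (b : Module.Basis ι ℤ_[p] M) (c : ℤ_[p]) (m : ℕ)
    (hm : Nat.card (ℤ_[p] ⧸ (c • (⊤ : Submodule ℤ_[p] ℤ_[p]))) = m) :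
    Nat.card (M ⧸ (c • (⊤ : Submodule ℤ_[p] M))) = m ^ Fintype.card ι := by
  have hmap : (c • (⊤ : Submodule ℤ_[p] M)).map (b.equivFun : M →ₗ[ℤ_[p]] (ι → ℤ_[p]))
      = c • (⊤ : Submodule ℤ_[p] (ι → ℤ_[p])) := by
    rw [Submodule.map_pointwise_smul, Submodule.map_top, LinearEquiv.range]
  have e1 := Submodule.Quotient.equiv (c • (⊤ : Submodule ℤ_[p] M))
      (c • (⊤ : Submodule ℤ_[p] (ι → ℤ_[p]))) b.equivFun hmap
  rw [Nat.card_congr e1.toEquiv, TMCS.pi_smul_top]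
  have e2 := Submodule.quotientPi (R := ℤ_[p]) (Ms := fun _ : ι => ℤ_[p])
    (fun _ => c • (⊤ : Submodule ℤ_[p] ℤ_[p]))
  rw [Nat.card_congr e2.toEquiv, Nat.card_pi]
  simp only [hm]
  rw [Finset.prod_const, Finset.card_univ]

lemma TMCS.card_quot_free {M : Type*} [AddCommGroup M] [Module ℤ_[p] M]
    [Module.Free ℤ_[p] M] [Module.Finite ℤ_[p] M] (n : ℕ) :
    Nat.card (M ⧸ ((p : ℤ_[p]) ^ n • (⊤ : Submodule ℤ_[p] M)))
      = p ^ (n * Module.finrank ℤ_[p] M) := by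
  classical
  rw [TMCS.card_quot_basis (Module.Free.chooseBasis ℤ_[p] M) _ _ (TMCS.card_quot_base n),
    ← pow_mul, Module.finrank_eq_card_chooseBasisIndex ℤ_[p] M]

lemma TMCS.comap_subtype_smul_top {T : Type*} [AddCommGroup T] [Module ℤ_[p] T]
    {Mt C : Submodule ℤ_[p] T} (h : IsCompl Mt C) (c : ℤ_[p]) :
    (c • (⊤ : Submodule ℤ_[p] T)).comap Mt.subtype = c • (⊤ : Submodule ℤ_[p] Mt) := by
  ext x
  rw [Submodule.mem_comap, TMCS.mem_smul_top, TMCS.mem_smul_top]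
  constructor
  · rintro ⟨y, hy⟩
    refine ⟨Mt.linearProjOfIsCompl C h y, ?_⟩
    have h2 := congrArg (Mt.linearProjOfIsCompl C h) hy
    rw [map_smul] at h2
    have h3 : Mt.linearProjOfIsCompl C h (Mt.subtype x) = x :=
      Submodule.linearProjOfIsCompl_apply_left h x
    rw [h3] at h2
    exact h2
  · rintro ⟨y, hy⟩
    exact ⟨(y : T), by rw [← hy]; rfl⟩

/-- Let `T = T_p(A)` be the `p`-adic Tate module of a semistable
abelian variety over `ℚ_N` (`p ≠ N`): a finite free `ℤ_p`-module with an automorphism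
`σ` (a topological generator of the inertia image) satisfying `(σ−1)² = 0`.  Let `M_t`
(the toric space) be a `ℤ_p`-direct summand of `T` containing `(σ−1)T` with finite
index, and suppose `length_{ℤ_p}((σ−1)(A[p])) = rank_{ℤ_p} M_t`, where
`A[pⁿ] = T/pⁿT` and lengths of finite `ℤ_p`-modules `W` are recorded via their
cardinalities `|W| = p^{length W}`.  Then
`length_{ℤ_p}((σ−1)(A[pⁿ])) = n · length_{ℤ_p}((σ−1)(A[p]))` for all `n ≥ 1`, and
`(σ−1)(T) = M_t`.  (Here `(σ−1)(A[pⁿ]) ≅ (σ−1)T / ((σ−1)T ∩ pⁿT)`.) -/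
theorem tate_module_conductor_stability
    {p : ℕ} [Fact p.Prime]
    {T : Type*} [AddCommGroup T] [Module ℤ_[p] T]
    [Module.Free ℤ_[p] T] [Module.Finite ℤ_[p] T]
    (σ : T ≃ₗ[ℤ_[p]] T)
    (f : T →ₗ[ℤ_[p]] T) (hf : f = σ.toLinearMap - LinearMap.id)
    (hf2 : ∀ x : T, f (f x) = 0)
    (Mt : Submodule ℤ_[p] T)
    (hsumm : ∃ C : Submodule ℤ_[p] T, IsCompl Mt C)
    (hsub : LinearMap.range f ≤ Mt)
    (hfinidx : Finite (↥Mt ⧸ ((LinearMap.range f).comap Mt.subtype)))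
    (hcond : Nat.card
        (↥(LinearMap.range f) ⧸
          (((p : ℤ_[p]) ^ 1 • (⊤ : Submodule ℤ_[p] T)).comap (LinearMap.range f).subtype))
      = p ^ Module.finrank ℤ_[p] ↥Mt) :
    (∀ n : ℕ, 1 ≤ n →
      Nat.card
          (↥(LinearMap.range f) ⧸
            (((p : ℤ_[p]) ^ n • (⊤ : Submodule ℤ_[p] T)).comap (LinearMap.range f).subtype))
        = (Nat.card
            (↥(LinearMap.range f) ⧸
              (((p : ℤ_[p]) ^ 1 • (⊤ : Submodule ℤ_[p] T)).comap
                (LinearMap.range f).subtype))) ^ n) ∧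
    LinearMap.range f = Mt := by
  classical
  obtain ⟨C, hC⟩ := hsumm
  haveI : IsNoetherian ℤ_[p] T := isNoetherian_of_isNoetherianRing_of_finite ℤ_[p] T
  haveI : Module.Finite ℤ_[p] ↥Mt := Module.Finite.iff_fg.mpr (IsNoetherian.noetherian Mt)
  haveI : Module.Finite ℤ_[p] ↥(LinearMap.range f) :=
    Module.Finite.iff_fg.mpr (IsNoetherian.noetherian _)
  have key1 : Nat.card (↥Mt ⧸ ((p : ℤ_[p]) ^ 1 • (⊤ : Submodule ℤ_[p] ↥Mt)))
      = p ^ Module.finrank ℤ_[p] ↥Mt := by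
    rw [TMCS.card_quot_free 1, one_mul]
  -- the comparison map
  set N1 : Submodule ℤ_[p] ↥Mt := (p : ℤ_[p]) ^ 1 • (⊤ : Submodule ℤ_[p] ↥Mt) with hN1
  set K : Submodule ℤ_[p] ↥(LinearMap.range f) :=
    ((p : ℤ_[p]) ^ 1 • (⊤ : Submodule ℤ_[p] T)).comap (LinearMap.range f).subtype with hKdef
  let g : ↥(LinearMap.range f) →ₗ[ℤ_[p]] ↥Mt ⧸ N1 := N1.mkQ.comp (Submodule.inclusion hsub)
  have hker : LinearMap.ker g = K := by
    ext x
    simp only [g, LinearMap.mem_ker, LinearMap.comp_apply, Submodule.mkQ_apply,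
      Submodule.Quotient.mk_eq_zero, hKdef, Submodule.mem_comap]
    rw [hN1, ← TMCS.comap_subtype_smul_top hC]
    rfl
  let ψ := K.liftQ g hker.ge
  have hinj : Function.Injective ψ :=
    LinearMap.ker_eq_bot.mp (Submodule.ker_liftQ_eq_bot K g hker.ge hker.le)
  haveI : Finite (↥Mt ⧸ N1) := by
    refine Nat.finite_of_card_ne_zero ?_
    rw [key1]
    exact pow_ne_zero _ (Fact.out : p.Prime).ne_zero
  have hbij : Function.Bijective ψ :=
    (Nat.bijective_iff_injective_and_card ψ).mpr ⟨hinj, by rw [hcond, key1]⟩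
  have hrange : LinearMap.range g = ⊤ := by
    rw [← Submodule.range_liftQ K g hker.ge]
    exact LinearMap.range_eq_top.mpr hbij.surjective
  have hmapt : Submodule.map N1.mkQ ((LinearMap.range f).comap Mt.subtype) = ⊤ := by
    rw [← Submodule.range_inclusion _ _ hsub, ← LinearMap.range_comp]
    exact hrange
  have hsup : N1 ⊔ (LinearMap.range f).comap Mt.subtype = ⊤ :=
    (Submodule.map_mkQ_eq_top _ _).mp hmapt
  -- Nakayama
  set R' : Submodule ℤ_[p] ↥Mt := (LinearMap.range f).comap Mt.subtype with hR'
  have htop : (⊤ : Submodule ℤ_[p] (↥Mt ⧸ R'))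
      ≤ (IsLocalRing.maximalIdeal ℤ_[p]) • ⊤ := by
    have h4 := congrArg (Submodule.map R'.mkQ) hsup
    rw [Submodule.map_sup, Submodule.map_top, Submodule.range_mkQ,
      Submodule.mkQ_map_self, sup_bot_eq, hN1, Submodule.map_pointwise_smul,
      Submodule.map_top, Submodule.range_mkQ] at h4
    refine le_trans (le_of_eq h4.symm) (le_of_eq ?_)
    rw [pow_one, ← Submodule.ideal_span_singleton_smul, ← PadicInt.maximalIdeal_eq_span_p]
  have hbot : (⊤ : Submodule ℤ_[p] (↥Mt ⧸ R')) = ⊥ :=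
    Submodule.eq_bot_of_le_smul_of_le_jacobson_bot (IsLocalRing.maximalIdeal ℤ_[p]) ⊤
      (Module.finite_def.mp inferInstance) htop
      (IsLocalRing.jacobson_eq_maximalIdeal ⊥ bot_ne_top).ge
  haveI : Subsingleton (↥Mt ⧸ R') := by
    constructor
    intro a b
    have ha : a ∈ (⊥ : Submodule ℤ_[p] (↥Mt ⧸ R')) := hbot ▸ Submodule.mem_top
    have hb : b ∈ (⊥ : Submodule ℤ_[p] (↥Mt ⧸ R')) := hbot ▸ Submodule.mem_top
    rw [Submodule.mem_bot] at ha hb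
    rw [ha, hb]
  have hR'top : R' = ⊤ := (Submodule.Quotient.subsingleton_iff (p := R')).mp inferInstance
  have hfeq : LinearMap.range f = Mt :=
    le_antisymm hsub (Submodule.comap_subtype_eq_top.mp hR'top)
  refine ⟨?_, hfeq⟩
  intro n hn
  have hC' : IsCompl (LinearMap.range f) C := hfeq ▸ hC
  rw [hKdef, TMCS.comap_subtype_smul_top hC', TMCS.comap_subtype_smul_top hC',
    TMCS.card_quot_free, TMCS.card_quot_free, one_mul, ← pow_mul, Nat.mul_comm]
end

section
/- Let Δ be the Frobenius group of order 20, presented as Δ = ⟨σ, τ | σ⁵ = τ⁴ = 1, τστ⁻¹ = σ²⟩, acting on the 4-dimensional 𝔽₂-vector space E = 𝔽₁₆ where σ acts as multiplication by a fixed primitive 5th root of unity ζ ∈ 𝔽₁₆^× and τ acts as the Frobenius x ↦ x². Then with 𝔥 = End_{𝔽₂}(E), the subspace 𝔥₀ of elements commuting with the action of σ equals 𝔽₂[s] ≅ 𝔽₁₆ where s is the action of σ, and H¹(Δ, 𝔥) = 0. -/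
open Polynomial

lemma adjoin_zeta_top (ζ : GaloisField 2 4) (hζ : IsPrimitiveRoot ζ 5) :
    Algebra.adjoin (ZMod 2) ({ζ} : Set (GaloisField 2 4)) = ⊤ := by
  classical
  set A := Algebra.adjoin (ZMod 2) ({ζ} : Set (GaloisField 2 4)) with hA
  haveI : Fintype (GaloisField 2 4) := Fintype.ofFinite _
  haveI : Fintype ↥A := Fintype.ofFinite ↥A
  have hζ5 : ζ ^ 5 = 1 := hζ.pow_eq_one
  have hζne1 : ζ ≠ 1 := by
    intro h
    have := hζ.dvd_of_pow_eq_one 1 (by rw [h, one_pow])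
    omega
  have hζ0 : ζ ≠ 0 := by
    intro h; rw [h, zero_pow (by norm_num)] at hζ5; exact zero_ne_one hζ5
  have hζA : ζ ∈ A := Algebra.self_mem_adjoin_singleton _ _
  have hordζ : orderOf ζ = 5 := by
    have h1 : orderOf ζ ∣ 5 := orderOf_dvd_of_pow_eq_one hζ5
    rcases (Nat.Prime.eq_one_or_self_of_dvd (by norm_num) _ h1) with h | h
    · exact absurd (orderOf_eq_one_iff.mp h) hζne1
    · exact h
  set ζu : (GaloisField 2 4)ˣ := (isUnit_iff_ne_zero.mpr hζ0).unit with hζu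
  have hζuval : (ζu : GaloisField 2 4) = ζ := IsUnit.unit_spec _
  have hordu : orderOf ζu = 5 := by rw [← orderOf_units, hζuval, hordζ]
  -- the subgroup of units lying in A
  have hinv : ∀ u : (GaloisField 2 4)ˣ, (u : GaloisField 2 4) ∈ A →
      ((u⁻¹ : (GaloisField 2 4)ˣ) : GaloisField 2 4) ∈ A := by
    intro u hu
    have hcard : u ^ Fintype.card (GaloisField 2 4)ˣ = 1 := pow_card_eq_one
    have hpos : 0 < Fintype.card (GaloisField 2 4)ˣ := Fintype.card_pos
    have : u⁻¹ = u ^ (Fintype.card (GaloisField 2 4)ˣ - 1) := by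
      apply inv_eq_of_mul_eq_one_right
      rw [← pow_succ', Nat.sub_add_cancel hpos]
      exact hcard
    rw [this, Units.val_pow_eq_pow_val]
    exact pow_mem hu _
  set V : Subgroup (GaloisField 2 4)ˣ :=
    { carrier := {u | (u : GaloisField 2 4) ∈ A}
      mul_mem' := fun ha hb => by simpa using mul_mem ha hb
      one_mem' := by simpa using one_mem A
      inv_mem' := fun {u} hu => hinv u hu } with hV
  have hUV : Subgroup.zpowers ζu ≤ V := by
    rw [Subgroup.zpowers_le]
    show (ζu : GaloisField 2 4) ∈ A
    rw [hζuval]; exact hζA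
  have h5 : (5 : ℕ) ∣ Nat.card V := by
    have := Subgroup.card_dvd_of_le hUV
    rwa [Nat.card_zpowers, hordu] at this
  -- card V = card A - 1
  have hne : ∀ a : {x : ↥A // x ≠ 0}, ((a : ↥A) : GaloisField 2 4) ≠ 0 := by
    intro a h; exact a.2 (Subtype.ext h)
  have e : V ≃ {x : ↥A // x ≠ 0} :=
    { toFun := fun u => ⟨⟨((u : (GaloisField 2 4)ˣ) : GaloisField 2 4), u.2⟩,
        fun h => Units.ne_zero _ (congrArg Subtype.val h)⟩
      invFun := fun a => ⟨(isUnit_iff_ne_zero.mpr (hne a)).unit, by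
        show (((isUnit_iff_ne_zero.mpr (hne a)).unit : (GaloisField 2 4)ˣ) :
          GaloisField 2 4) ∈ A
        rw [IsUnit.unit_spec]; exact (a : ↥A).2⟩
      left_inv := fun u => by
        apply Subtype.ext; apply Units.ext; exact IsUnit.unit_spec _
      right_inv := fun a => by
        apply Subtype.ext; apply Subtype.ext; simp [IsUnit.unit_spec] }
  have hcardV : Nat.card V = Fintype.card ↥A - 1 := by
    rw [Nat.card_congr e, Nat.card_eq_fintype_card]
    have : Fintype.card {x : ↥A // ¬ (x = 0)} = Fintype.card ↥A - Fintype.card {x : ↥A // x = 0} :=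
      Fintype.card_subtype_compl _
    rw [Fintype.card_subtype_eq (0 : ↥A)] at this
    exact this
  have hcardA : Fintype.card ↥A = 2 ^ Module.finrank (ZMod 2) ↥A := by
    have := Module.card_eq_pow_finrank (K := ZMod 2) (V := ↥A)
    rwa [ZMod.card] at this
  have hfinrankE : Module.finrank (ZMod 2) (GaloisField 2 4) = 4 :=
    GaloisField.finrank 2 (by norm_num)
  have hle : Module.finrank (ZMod 2) ↥A ≤ 4 := by
    have h := (Subalgebra.toSubmodule A).finrank_le
    rw [hfinrankE] at h
    exact h
  haveI : Nontrivial ↥A := ⟨⟨0, 1, fun h => zero_ne_one (congrArg Subtype.val h)⟩⟩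
  have hpos : 0 < Module.finrank (ZMod 2) ↥A := Module.finrank_pos
  set d := Module.finrank (ZMod 2) ↥A with hd
  rw [hcardV, hcardA] at h5
  have hd4 : d = 4 := by interval_cases d <;> first | rfl | (exfalso; norm_num at h5)
  have : Subalgebra.toSubmodule A = ⊤ := by
    apply Submodule.eq_top_of_finrank_eq
    show Module.finrank (ZMod 2) ↥A = Module.finrank (ZMod 2) (GaloisField 2 4)
    rw [hfinrankE]; exact hd4
  rwa [Algebra.toSubmodule_eq_top] at this


noncomputable instance fintypeGF24 : Fintype (GaloisField 2 4) := Fintype.ofFinite _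

lemma char2E : (2 : GaloisField 2 4) = 0 := by
  exact_mod_cast CharP.cast_eq_zero (GaloisField 2 4) 2

lemma sq_add (x y : GaloisField 2 4) : (x + y) ^ 2 = x ^ 2 + y ^ 2 := by
  ring_nf; simp [char2E]

lemma pow4_add (z w : GaloisField 2 4) : (z + w) ^ 4 = z ^ 4 + w ^ 4 := by
  calc (z + w) ^ 4 = ((z + w) ^ 2) ^ 2 := by ring
  _ = (z ^ 2 + w ^ 2) ^ 2 := by rw [sq_add]
  _ = (z ^ 2) ^ 2 + (w ^ 2) ^ 2 := sq_add _ _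
  _ = z ^ 4 + w ^ 4 := by ring

lemma pow8_add (z w : GaloisField 2 4) : (z + w) ^ 8 = z ^ 8 + w ^ 8 := by
  calc (z + w) ^ 8 = ((z + w) ^ 4) ^ 2 := by ring
  _ = (z ^ 4 + w ^ 4) ^ 2 := by rw [pow4_add]
  _ = (z ^ 4) ^ 2 + (w ^ 4) ^ 2 := sq_add _ _
  _ = z ^ 8 + w ^ 8 := by ring

lemma cardE : Fintype.card (GaloisField 2 4) = 16 := by
  have := GaloisField.card 2 4 (by norm_num)
  rw [Nat.card_eq_fintype_card] at this
  norm_num at this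
  exact this

lemma pow16 (x : GaloisField 2 4) : x ^ 16 = x := by
  have := FiniteField.pow_card x
  rwa [cardE] at this

/-- The Artin–Schreier map `b ↦ b² + b` as a `ZMod 2`-linear endomorphism. -/
noncomputable def ASmap : GaloisField 2 4 →ₗ[ZMod 2] GaloisField 2 4 where
  toFun b := b ^ 2 + b
  map_add' x y := by
    show (x + y) ^ 2 + (x + y) = (x ^ 2 + x) + (y ^ 2 + y)
    rw [sq_add]; ring
  map_smul' r x := by
    show (r • x) ^ 2 + r • x = r • (x ^ 2 + x)
    rcases (show ∀ r : ZMod 2, r = 0 ∨ r = 1 by decide) r with rfl | rfl <;> simp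

/-- The trace map `b ↦ b + b² + b⁴ + b⁸` as a `ZMod 2`-linear endomorphism. -/
noncomputable def TrMap : GaloisField 2 4 →ₗ[ZMod 2] GaloisField 2 4 where
  toFun b := b + b ^ 2 + b ^ 4 + b ^ 8
  map_add' x y := by
    show (x+y) + (x+y)^2 + (x+y)^4 + (x+y)^8
      = (x + x^2 + x^4 + x^8) + (y + y^2 + y^4 + y^8)
    rw [sq_add, pow4_add, pow8_add]; ring
  map_smul' r x := by
    show (r • x) + (r • x)^2 + (r • x)^4 + (r • x)^8
      = r • (x + x^2 + x^4 + x^8)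
    rcases (show ∀ r : ZMod 2, r = 0 ∨ r = 1 by decide) r with rfl | rfl <;> simp

lemma exists_artin_schreier (a : GaloisField 2 4)
    (ha : a + a ^ 2 + a ^ 4 + a ^ 8 = 0) :
    ∃ b : GaloisField 2 4, b ^ 2 + b = a := by
  classical
  have hfr : Module.finrank (ZMod 2) (GaloisField 2 4) = 4 :=
    GaloisField.finrank 2 (by norm_num)
  have hker : LinearMap.ker ASmap = Submodule.span (ZMod 2) {1} := by
    ext b
    rw [LinearMap.mem_ker, Submodule.mem_span_singleton]
    constructor
    · intro hb
      have hbe : ASmap b = b ^ 2 + b := rfl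
      rw [hbe] at hb
      have hb' : b * (b + 1) = 0 := by linear_combination hb
      rcases mul_eq_zero.mp hb' with h | h
      · exact ⟨0, by simp [h]⟩
      · refine ⟨1, ?_⟩
        have hb1 : b = 1 := by linear_combination h - char2E
        simp [hb1]
    · rintro ⟨r, rfl⟩
      rcases (show ∀ r : ZMod 2, r = 0 ∨ r = 1 by decide) r with rfl | rfl
      · show ((0 : ZMod 2) • (1 : GaloisField 2 4)) ^ 2 + _ = 0
        simp
      · show ((1 : ZMod 2) • (1 : GaloisField 2 4)) ^ 2 + _ = 0
        simp
        linear_combination char2E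
  have hkerrank : Module.finrank (ZMod 2) (LinearMap.ker ASmap) = 1 := by
    rw [hker]
    exact finrank_span_singleton one_ne_zero
  have hrangerank : Module.finrank (ZMod 2) (LinearMap.range ASmap) = 3 := by
    have := LinearMap.finrank_range_add_finrank_ker ASmap
    rw [hfr, hkerrank] at this
    omega
  have hle : LinearMap.range ASmap ≤ LinearMap.ker TrMap := by
    rintro x ⟨b, rfl⟩
    rw [LinearMap.mem_ker]
    show (b^2+b) + (b^2+b)^2 + (b^2+b)^4 + (b^2+b)^8 = 0
    have e2 : (b^2+b)^2 = b^4 + b^2 := by rw [sq_add]; ring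
    have e4 : (b^2+b)^4 = b^8 + b^4 := by rw [pow4_add]; ring
    have e8 : (b^2+b)^8 = b^16 + b^8 := by rw [pow8_add]; ring
    rw [e2, e4, e8, pow16 b]
    ring_nf
    simp [char2E]
  have hTne : TrMap ≠ 0 := by
    intro hT
    set P : Polynomial (GaloisField 2 4) := X + X ^ 2 + X ^ 4 + X ^ 8 with hP
    have hroots : ∀ x : GaloisField 2 4, P.eval x = 0 := by
      intro x
      have hx : x + x ^ 2 + x ^ 4 + x ^ 8 = 0 := by
        have : TrMap x = 0 := by rw [hT]; rfl
        exact this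
      simp only [hP, Polynomial.eval_add, Polynomial.eval_pow, Polynomial.eval_X]
      linear_combination hx
    have hdeg : P.natDegree < Fintype.card (GaloisField 2 4) := by
      rw [cardE]
      have : P.natDegree ≤ 8 := by rw [hP]; compute_degree
      omega
    have hP0 : P = 0 :=
      Polynomial.eq_zero_of_natDegree_lt_card_of_eval_eq_zero P
        (f := (id : GaloisField 2 4 → GaloisField 2 4)) Function.injective_id
        (fun x => hroots x) hdeg
    have hc : P.coeff 1 = 1 := by
      rw [hP]
      simp [Polynomial.coeff_X_pow, Polynomial.coeff_one]
    rw [hP0] at hc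
    simp at hc
  have hkerT : Module.finrank (ZMod 2) (LinearMap.ker TrMap) ≤ 3 := by
    have h1 := LinearMap.finrank_range_add_finrank_ker TrMap
    rw [hfr] at h1
    have h2 : LinearMap.range TrMap ≠ ⊥ := fun h => hTne (LinearMap.range_eq_bot.mp h)
    have h3 : Module.finrank (ZMod 2) (LinearMap.range TrMap) ≠ 0 := by
      intro h
      exact h2 (Submodule.finrank_eq_zero.mp h)
    omega
  have heq : LinearMap.range ASmap = LinearMap.ker TrMap := by
    apply Submodule.eq_of_le_of_finrank_le hle
    rw [hrangerank]
    exact hkerT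
  have haT : a ∈ LinearMap.ker TrMap := by
    rw [LinearMap.mem_ker]
    exact ha
  rw [← heq] at haT
  obtain ⟨b, hb⟩ := haT
  exact ⟨b, hb⟩



lemma end_semilinear (ζ : GaloisField 2 4) (hζ : IsPrimitiveRoot ζ 5)
    (h : Module.End (ZMod 2) (GaloisField 2 4))
    (hcomm : ∀ x, h (ζ * x) = ζ * h x) : ∀ a x, h (a * x) = a * h x := by
  have htop := adjoin_zeta_top ζ hζ
  intro a
  have ha : a ∈ Algebra.adjoin (ZMod 2) ({ζ} : Set (GaloisField 2 4)) := by
    rw [htop]; exact Algebra.mem_top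
  induction ha using Algebra.adjoin_induction with
  | mem z hz =>
      rw [Set.mem_singleton_iff] at hz; subst hz; intro x; exact hcomm x
  | algebraMap r =>
      intro x; rw [← Algebra.smul_def, map_smul, Algebra.smul_def]
  | add y z hy hz hy' hz' =>
      intro x; rw [add_mul, map_add, hy', hz', add_mul]
  | mul y z hy hz hy' hz' =>
      intro x; rw [mul_assoc, hy', hz', mul_assoc]

lemma commutant_mul (ζ : GaloisField 2 4) (hζ : IsPrimitiveRoot ζ 5)
    (S : Module.End (ZMod 2) (GaloisField 2 4)) (hS : ∀ x, S x = ζ * x)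
    (h : Module.End (ZMod 2) (GaloisField 2 4)) :
    (h ∘ₗ S = S ∘ₗ h) ↔ (∃ a : GaloisField 2 4, ∀ x, h x = a * x) := by
  constructor
  · intro hc
    have hcomm : ∀ x, h (ζ * x) = ζ * h x := by
      intro x
      have := LinearMap.ext_iff.mp hc x
      simpa [LinearMap.comp_apply, hS] using this
    have key := end_semilinear ζ hζ h hcomm
    exact ⟨h 1, fun x => by rw [← mul_one x, key x 1, mul_one, mul_comm]⟩
  · rintro ⟨a, ha⟩
    ext x
    simp only [LinearMap.comp_apply, hS, ha]
    ring

lemma commutant_poly (ζ : GaloisField 2 4) (hζ : IsPrimitiveRoot ζ 5)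
    (S : Module.End (ZMod 2) (GaloisField 2 4)) (hS : ∀ x, S x = ζ * x)
    (h : Module.End (ZMod 2) (GaloisField 2 4)) :
    (h ∘ₗ S = S ∘ₗ h) ↔ (∃ q : Polynomial (ZMod 2), h = Polynomial.aeval S q) := by
  have hSl : S = Algebra.lmul (ZMod 2) (GaloisField 2 4) ζ := by
    ext x; simp [hS]
  constructor
  · intro hc
    obtain ⟨a, ha⟩ := (commutant_mul ζ hζ S hS h).mp hc
    have haA : a ∈ Algebra.adjoin (ZMod 2) ({ζ} : Set (GaloisField 2 4)) := by
      rw [adjoin_zeta_top ζ hζ]; exact Algebra.mem_top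
    rw [Algebra.adjoin_singleton_eq_range_aeval] at haA
    obtain ⟨q, hq⟩ := haA
    have hq' : Polynomial.aeval ζ q = a := hq
    refine ⟨q, ?_⟩
    rw [hSl, Polynomial.aeval_algHom_apply]
    ext x
    rw [ha x, hq']
    simp
  · rintro ⟨q, rfl⟩
    have h2 : ∀ p₁ p₂ : Polynomial (ZMod 2),
        Polynomial.aeval (R := ZMod 2) S (p₁ * p₂)
          = Polynomial.aeval (R := ZMod 2) S p₁ ∘ₗ Polynomial.aeval (R := ZMod 2) S p₂ := by
      intro p₁ p₂; rw [map_mul, Module.End.mul_eq_comp]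
    have := h2 q Polynomial.X
    rw [Polynomial.aeval_X, mul_comm, h2 Polynomial.X q, Polynomial.aeval_X] at this
    exact this.symm

section ConjAct

variable {G : Type*} [Group G]

noncomputable def conjE (ρ : Representation (ZMod 2) G (GaloisField 2 4)) (g : G)
    (x : Module.End (ZMod 2) (GaloisField 2 4)) : Module.End (ZMod 2) (GaloisField 2 4) :=
  ρ g ∘ₗ x ∘ₗ ρ g⁻¹

variable (ρ : Representation (ZMod 2) G (GaloisField 2 4))

lemma conjE_one (x : Module.End (ZMod 2) (GaloisField 2 4)) : conjE ρ 1 x = x := by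
  simp only [conjE, inv_one, map_one, Module.End.one_eq_id, LinearMap.comp_id, LinearMap.id_comp]

lemma conjE_add (g : G) (x y : Module.End (ZMod 2) (GaloisField 2 4)) :
    conjE ρ g (x + y) = conjE ρ g x + conjE ρ g y := by
  simp [conjE, LinearMap.add_comp, LinearMap.comp_add]

lemma conjE_sub (g : G) (x y : Module.End (ZMod 2) (GaloisField 2 4)) :
    conjE ρ g (x - y) = conjE ρ g x - conjE ρ g y := by
  simp [conjE, LinearMap.sub_comp, LinearMap.comp_sub]

lemma conjE_zero (g : G) : conjE ρ g 0 = 0 := by simp [conjE]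

lemma conjE_mul (g₁ g₂ : G) (x : Module.End (ZMod 2) (GaloisField 2 4)) :
    conjE ρ g₁ (conjE ρ g₂ x) = conjE ρ (g₁ * g₂) x := by
  simp only [conjE, map_mul, mul_inv_rev, Module.End.mul_eq_comp, LinearMap.comp_assoc]

end ConjAct

/-- multiplication operator -/
noncomputable def mulE (e : GaloisField 2 4) : Module.End (ZMod 2) (GaloisField 2 4) :=
  LinearMap.mulLeft (ZMod 2) e

lemma mulE_apply (e x : GaloisField 2 4) : mulE e x = e * x := rfl

attribute [-instance] fintypeGF24

/-- Let `Δ = ⟨σ, τ | σ⁵ = τ⁴ = 1, τστ⁻¹ = σ²⟩` be the Frobenius group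
of order `20` acting on the 4-dimensional `𝔽₂`-vector space `E = 𝔽₁₆`, where `σ` acts
as multiplication by a primitive 5th root of unity `ζ` and `τ` acts as the Frobenius
`x ↦ x²`.  With `𝔥 = End_{𝔽₂}(E)` (with conjugation action), the subspace `𝔥₀` of
elements commuting with `σ` equals `𝔽₂[s] ≅ 𝔽₁₆` (`s` the action of `σ`, i.e. the
multiplication operators), and `H¹(Δ, 𝔥) = 0` (every 1-cocycle is a coboundary). -/
theorem frobenius20_commutant_and_H1_vanishing
    {G : Type*} [Group G] [Finite G]
    (s t : G) (hs5 : s ^ 5 = 1) (ht4 : t ^ 4 = 1)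
    (hconj : t * s * t⁻¹ = s ^ 2)
    (hgen : Subgroup.closure ({s, t} : Set G) = ⊤)
    (hcard : Nat.card G = 20)
    (ζ : GaloisField 2 4) (hζ : IsPrimitiveRoot ζ 5)
    (ρ : Representation (ZMod 2) G (GaloisField 2 4))
    (hρs : ∀ x, ρ s x = ζ * x)
    (hρt : ∀ x, ρ t x = x ^ 2) :
    -- 𝔥₀ = 𝔽₂[s] ≅ 𝔽₁₆ :
    (∀ h : Module.End (ZMod 2) (GaloisField 2 4),
      (h ∘ₗ ρ s = ρ s ∘ₗ h) ↔ (∃ a : GaloisField 2 4, ∀ x, h x = a * x)) ∧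
    (∀ h : Module.End (ZMod 2) (GaloisField 2 4),
      (h ∘ₗ ρ s = ρ s ∘ₗ h) ↔
        (∃ q : Polynomial (ZMod 2), h = Polynomial.aeval (ρ s) q)) ∧
    -- H¹(Δ, 𝔥) = 0 :
    (∀ c : G → Module.End (ZMod 2) (GaloisField 2 4),
      (∀ g₁ g₂ : G, c (g₁ * g₂) = c g₁ + (ρ g₁) ∘ₗ (c g₂) ∘ₗ (ρ g₁⁻¹)) →
        ∃ h₀ : Module.End (ZMod 2) (GaloisField 2 4),
          ∀ g : G, c g = (ρ g) ∘ₗ h₀ ∘ₗ (ρ g⁻¹) - h₀) := by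
  classical
  refine ⟨fun h => commutant_mul ζ hζ (ρ s) hρs h,
    fun h => commutant_poly ζ hζ (ρ s) hρs h, ?_⟩
  intro c hc
  have hH2 : ∀ x : Module.End (ZMod 2) (GaloisField 2 4), x + x = 0 := by
    intro x
    have h1 : ((1 : ZMod 2) + 1) • x = x + x := by rw [add_smul, one_smul]
    rw [← h1, show (1 : ZMod 2) + 1 = 0 by decide, zero_smul]
  have hHneg : ∀ x : Module.End (ZMod 2) (GaloisField 2 4), -x = x := by
    intro x; rw [neg_eq_iff_add_eq_zero]; exact hH2 x
  have happly : ∀ (g : G) (x : GaloisField 2 4), ρ g (ρ g⁻¹ x) = x := by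
    intro g x
    have h1 : ρ g * ρ g⁻¹ = 1 := by rw [← map_mul, mul_inv_cancel, map_one]
    have h2 := LinearMap.ext_iff.mp h1 x
    simpa using h2
  have hcA : ∀ g₁ g₂ : G, c (g₁ * g₂) = c g₁ + conjE ρ g₁ (c g₂) := hc
  have hc1 : c 1 = 0 := by
    have h := hcA 1 1
    rw [one_mul, conjE_one] at h
    exact (left_eq_add.mp h)
  set m : Module.End (ZMod 2) (GaloisField 2 4) :=
    c (s^1) + c (s^2) + c (s^3) + c (s^4) + c (s^5) with hm
  have hstep : ∀ k : ℕ, conjE ρ s (c (s^k)) = c (s^(k+1)) - c s := by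
    intro k
    have h := hcA s (s^k)
    rw [← pow_succ'] at h
    rw [h]; abel
  have hs6 : s^6 = s := by
    rw [show (6:ℕ) = 5+1 from rfl, pow_succ, hs5, one_mul]
  have hAm : conjE ρ s m = m - c s := by
    rw [hm, conjE_add, conjE_add, conjE_add, conjE_add,
      hstep 1, hstep 2, hstep 3, hstep 4, hstep 5, hs6]
    rw [pow_one]
    rw [show c s = (1 : ZMod 2) • c s from (one_smul _ _).symm]
    match_scalars <;> decide
  have hcs : c s = conjE ρ s m - m := by
    rw [hAm]
    rw [show c s = (1 : ZMod 2) • c s from (one_smul _ _).symm]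
    match_scalars <;> decide
  set c' : G → Module.End (ZMod 2) (GaloisField 2 4) :=
    fun g => c g - (conjE ρ g m - m) with hc'
  have hc'A : ∀ g₁ g₂ : G, c' (g₁ * g₂) = c' g₁ + conjE ρ g₁ (c' g₂) := by
    intro g₁ g₂
    simp only [hc']
    rw [hcA g₁ g₂]
    simp only [conjE_sub, conjE_mul]
    abel
  have hc's : c' s = 0 := by
    simp only [hc']
    rw [hcs, sub_self]
  have hc'1 : c' 1 = 0 := by
    simp only [hc']
    rw [hc1, conjE_one]
    simp
  have hc's2 : c' (s ^ 2) = 0 := by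
    have h := hc'A s s
    rw [← pow_two] at h
    rw [h, hc's, conjE_zero, add_zero]
  have hu2 : c' t = conjE ρ (s ^ 2) (c' t) := by
    have h1 : c' (t * s) = c' t := by rw [hc'A, hc's, conjE_zero, add_zero]
    have hts : t * s = s ^ 2 * t := by rw [← hconj]; group
    have h2 : c' (s ^ 2 * t) = conjE ρ (s ^ 2) (c' t) := by rw [hc'A, hc's2, zero_add]
    calc c' t = c' (t * s) := h1.symm
    _ = c' (s ^ 2 * t) := by rw [hts]
    _ = conjE ρ (s ^ 2) (c' t) := h2
  have hucomm : (c' t) ∘ₗ ρ s = ρ s ∘ₗ (c' t) := by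
    have hcancel : ρ (s ^ 2)⁻¹ * ρ (s ^ 2) = 1 := by
      rw [← map_mul, inv_mul_cancel, map_one]
    have hcomm2 : Commute (ρ (s ^ 2)) (c' t) := by
      show ρ (s ^ 2) * (c' t) = (c' t) * ρ (s ^ 2)
      conv_rhs => rw [hu2]
      show _ = (ρ (s ^ 2) * (c' t) * ρ (s ^ 2)⁻¹) * ρ (s ^ 2)
      rw [mul_assoc (ρ (s ^ 2) * (c' t)), hcancel, mul_one]
    have hcomm1 : Commute (ρ s) (c' t) := by
      have h3 := hcomm2.pow_left 3
      rw [← map_pow] at h3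
      have hs23 : (s ^ 2) ^ 3 = s := by
        rw [← pow_mul]
        norm_num
        exact hs6
      rwa [hs23] at h3
    rw [← Module.End.mul_eq_comp, ← Module.End.mul_eq_comp]
    exact hcomm1.eq.symm
  obtain ⟨a, ha⟩ := (commutant_mul ζ hζ (ρ s) hρs (c' t)).mp hucomm
  have hu_eq : c' t = mulE a := LinearMap.ext fun x => by rw [ha x, mulE_apply]
  have hAt_mul : ∀ e : GaloisField 2 4, conjE ρ t (mulE e) = mulE (e ^ 2) := by
    intro e
    ext x
    show ρ t (mulE e (ρ t⁻¹ x)) = mulE (e ^ 2) x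
    rw [mulE_apply, mulE_apply, hρt, mul_pow]
    congr 1
    rw [← hρt, happly]
  have hAs_mul : ∀ e : GaloisField 2 4, conjE ρ s (mulE e) = mulE e := by
    intro e
    ext x
    show ρ s (mulE e (ρ s⁻¹ x)) = mulE e x
    rw [mulE_apply, mulE_apply, hρs, mul_left_comm]
    congr 1
    rw [← hρs, happly]
  have hk2 : c' (t * t) = mulE a + mulE (a ^ 2) := by
    rw [hc'A, hu_eq, hAt_mul]
  have hk3 : c' (t * (t * t)) = mulE a + (mulE (a ^ 2) + mulE (a ^ 4)) := by
    rw [hc'A, hk2, conjE_add, hAt_mul, hAt_mul, hu_eq,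
      show ((a : GaloisField 2 4) ^ 2) ^ 2 = a ^ 4 from by ring]
  have hk4 : c' (t * (t * (t * t)))
      = mulE a + (mulE (a ^ 2) + (mulE (a ^ 4) + mulE (a ^ 8))) := by
    rw [hc'A, hk3, conjE_add, conjE_add, hAt_mul, hAt_mul, hAt_mul, hu_eq,
      show ((a : GaloisField 2 4) ^ 2) ^ 2 = a ^ 4 from by ring,
      show ((a : GaloisField 2 4) ^ 4) ^ 2 = a ^ 8 from by ring]
  have hsum : mulE a + (mulE (a ^ 2) + (mulE (a ^ 4) + mulE (a ^ 8))) = 0 := by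
    rw [← hk4, show t * (t * (t * t)) = (1 : G) from by rw [← ht4, pow_succ, pow_succ, pow_two, mul_assoc, mul_assoc], hc'1]
  have hatrace : a + a ^ 2 + a ^ 4 + a ^ 8 = 0 := by
    have h1 := LinearMap.ext_iff.mp hsum 1
    simp only [LinearMap.add_apply, mulE_apply, mul_one, LinearMap.zero_apply] at h1
    linear_combination h1
  obtain ⟨b, hb⟩ := exists_artin_schreier a hatrace
  have hbsub : mulE (b ^ 2) - mulE b = mulE a := by
    ext x
    simp only [LinearMap.sub_apply, mulE_apply]
    rw [← hb]
    linear_combination (-b * x) * char2E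
  refine ⟨m + mulE b, ?_⟩
  have hfinal : ∀ g ∈ Subgroup.closure ({s, t} : Set G),
      c g = conjE ρ g (m + mulE b) - (m + mulE b) := by
    intro g hg
    induction hg using Subgroup.closure_induction with
    | mem x hx =>
      rcases hx with hx | hx
      · rw [hx, conjE_add, hAs_mul, hcs]
        abel
      · rw [Set.mem_singleton_iff] at hx
        rw [hx, conjE_add]
        have h5 : conjE ρ t (mulE b) - mulE b = c t - (conjE ρ t m - m) := by
          rw [hAt_mul, hbsub, ← hu_eq]
        rw [eq_sub_iff_add_eq] at h5
        rw [← h5]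
        abel
    | one => rw [hc1, conjE_one, sub_self]
    | mul x y hx hy ihx ihy =>
      rw [hcA, ihx, ihy, conjE_sub, conjE_mul]
      abel
    | inv x hx ihx =>
      have h := hcA x⁻¹ x
      rw [inv_mul_cancel, hc1] at h
      have h2 : c x⁻¹ = - conjE ρ x⁻¹ (c x) := by
        rw [eq_neg_iff_add_eq_zero]
        exact h.symm
      rw [h2, ihx, conjE_sub, conjE_mul, inv_mul_cancel, conjE_one]
      abel
  intro g
  exact hfinal g (by rw [hgen]; exact Subgroup.mem_top g)
end
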